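/- arXiv:math/0602425 — 6 statements merged into one kernel-verified Lean document; each statement's English description precedes it below -/
import Mathlib

section
/- For complex s with 3/4 < Re(s) < 1, the integral ∫_0^∞ J_0(2√t) t^{-s} dt converges absolutely and equals Γ(1-s)/Γ(s). -/
open MeasureTheory

/-- `J0sq t = J₀(2√t) = ∑ (-1)ⁿ tⁿ/(n!)²`. -/
noncomputable def J0sq (t : ℝ) : ℝ := ∑' n : ℕ, (-1)^n * t^n / ((Nat.factorial n : ℝ))^2

open MeasureTheory Real Set Filter

namespace J0aux

noncomputable def a (n : ℕ) : ℝ := (-1)^n / ((Nat.factorial n : ℝ))^2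

lemma abs_a_le (n : ℕ) : |a n| ≤ 1 / (Nat.factorial n : ℝ) := by
  have h1 : (1:ℝ) ≤ (Nat.factorial n : ℝ) := by exact_mod_cast Nat.one_le_iff_ne_zero.mpr n.factorial_ne_zero
  rw [a, abs_div, abs_pow, abs_neg, abs_one, one_pow]
  rw [abs_of_nonneg (by positivity : (0:ℝ) ≤ ((Nat.factorial n : ℝ))^2)]
  apply div_le_div_of_nonneg_left (by norm_num) (by positivity)
  nlinarith

noncomputable def y (t : ℝ) : ℝ := ∑' n, a n * t^n
noncomputable def y1 (t : ℝ) : ℝ := ∑' n, a n * ((n:ℝ) * t^(n-1))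
noncomputable def y2 (t : ℝ) : ℝ := ∑' n, a n * ((n:ℝ) * (((n:ℝ)-1) * t^(n-2)))

lemma summable_aux {c : ℝ} (hc : 0 ≤ c) : Summable (fun n : ℕ => c^n / (Nat.factorial n : ℝ)) :=
  Real.summable_pow_div_factorial c

lemma summable_y (t : ℝ) : Summable (fun n => a n * t^n) := by
  apply Summable.of_norm_bounded (Real.summable_pow_div_factorial |t|)
  intro n
  rw [norm_mul, norm_pow]
  calc ‖a n‖ * ‖t‖^n ≤ (1 / (Nat.factorial n : ℝ)) * |t|^n := by
        apply mul_le_mul_of_nonneg_right (abs_a_le n) (by positivity)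
    _ = |t|^n / (Nat.factorial n : ℝ) := by ring

end J0aux

namespace J0aux
open J0aux

lemma nat_le_two_pow (n : ℕ) : (n : ℝ) ≤ 2^n := by
  exact_mod_cast (Nat.lt_two_pow_self (n := n)).le

lemma sq_nat_le_four_pow (n : ℕ) : (n : ℝ)^2 ≤ 4^n := by
  have h := nat_le_two_pow n
  have h2 : ((2:ℝ)^n)^2 = 4^n := by
    rw [← pow_mul, mul_comm, pow_mul]
    norm_num
  nlinarith [pow_nonneg (by norm_num : (0:ℝ) ≤ 2) n, Nat.cast_nonneg (α := ℝ) n]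

lemma pow_pred_le {R : ℝ} (hR : 1 ≤ R) {z : ℝ} (hz : |z| ≤ R) (k n : ℕ) :
    |z|^(n - k) ≤ R^n := by
  calc |z|^(n-k) ≤ R^(n-k) := pow_le_pow_left₀ (abs_nonneg z) hz _
    _ ≤ R^n := pow_le_pow_right₀ hR (Nat.sub_le n k)

lemma bound_d1 {R : ℝ} (hR : 1 ≤ R) {z : ℝ} (hz : |z| ≤ R) (n : ℕ) :
    ‖a n * ((n:ℝ) * z^(n-1))‖ ≤ (2*R)^n / (Nat.factorial n : ℝ) := by
  rw [norm_mul, norm_mul, norm_pow]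
  have h1 : ‖a n‖ ≤ 1 / (Nat.factorial n : ℝ) := abs_a_le n
  have h2 : ‖(n:ℝ)‖ ≤ 2^n := by rw [Real.norm_natCast]; exact nat_le_two_pow n
  have h3 : ‖z‖^(n-1) ≤ R^n := pow_pred_le hR hz 1 n
  calc ‖a n‖ * (‖(n:ℝ)‖ * ‖z‖^(n-1)) ≤ (1/(Nat.factorial n:ℝ)) * (2^n * R^n) := by
        gcongr <;> positivity
    _ = (2*R)^n / (Nat.factorial n : ℝ) := by rw [mul_pow]; ring

lemma bound_d2 {R : ℝ} (hR : 1 ≤ R) {z : ℝ} (hz : |z| ≤ R) (n : ℕ) :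
    ‖a n * ((n:ℝ) * (((n:ℝ)-1) * z^(n-2)))‖ ≤ (4*R)^n / (Nat.factorial n : ℝ) := by
  rw [norm_mul, norm_mul, norm_mul, norm_pow]
  have h1 : ‖a n‖ ≤ 1 / (Nat.factorial n : ℝ) := abs_a_le n
  have h2 : ‖(n:ℝ)‖ * ‖(n:ℝ)-1‖ ≤ 4^n := by
    rw [Real.norm_natCast, Real.norm_eq_abs]
    rcases Nat.eq_zero_or_pos n with hn | hn
    · subst hn; norm_num
    · have h1n : (1:ℝ) ≤ (n:ℝ) := by exact_mod_cast hn
      have : |(n:ℝ) - 1| ≤ (n:ℝ) := by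
        rw [abs_le]; constructor <;> linarith
      calc (n:ℝ) * |(n:ℝ)-1| ≤ (n:ℝ) * (n:ℝ) := by
            apply mul_le_mul_of_nonneg_left this (Nat.cast_nonneg n)
        _ = (n:ℝ)^2 := (sq (n:ℝ)).symm
        _ ≤ 4^n := sq_nat_le_four_pow n
  have h3 : ‖z‖^(n-2) ≤ R^n := pow_pred_le hR hz 2 n
  calc ‖a n‖ * (‖(n:ℝ)‖ * (‖(n:ℝ)-1‖ * ‖z‖^(n-2)))
      = ‖a n‖ * ((‖(n:ℝ)‖ * ‖(n:ℝ)-1‖) * ‖z‖^(n-2)) := by ring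
    _ ≤ (1/(Nat.factorial n:ℝ)) * (4^n * R^n) := by
        gcongr <;> positivity
    _ = (4*R)^n / (Nat.factorial n : ℝ) := by rw [mul_pow]; ring

lemma summable_y1 (t : ℝ) : Summable (fun n => a n * ((n:ℝ) * t^(n-1))) := by
  apply Summable.of_norm_bounded (Real.summable_pow_div_factorial (2*(|t|+1)))
  intro n
  exact bound_d1 (by linarith [abs_nonneg t]) (by linarith) n

lemma summable_y2 (t : ℝ) : Summable (fun n => a n * ((n:ℝ) * (((n:ℝ)-1) * t^(n-2)))) := by
  apply Summable.of_norm_bounded (Real.summable_pow_div_factorial (4*(|t|+1)))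
  intro n
  exact bound_d2 (by linarith [abs_nonneg t]) (by linarith) n

lemma hasDerivAt_y (t : ℝ) : HasDerivAt y (y1 t) t := by
  set R := |t| + 1 with hRdef
  have hR : 1 ≤ R := by linarith [abs_nonneg t]
  have ht : t ∈ Ioo (-R) R := by
    constructor <;> [nlinarith [neg_abs_le t]; nlinarith [le_abs_self t]]
  exact hasDerivAt_tsum_of_isPreconnected
    (Real.summable_pow_div_factorial (2*R)) isOpen_Ioo (convex_Ioo _ _).isPreconnected
    (fun n z _ => (hasDerivAt_pow n z).const_mul (a n))
    (fun n z hz => bound_d1 hR (by rw [abs_le]; exact ⟨hz.1.le, hz.2.le⟩) n)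
    ht (summable_y t) ht

lemma hasDerivAt_term1 (c : ℝ) (n : ℕ) (x : ℝ) :
    HasDerivAt (fun z : ℝ => c * ((n:ℝ) * z^(n-1))) (c * ((n:ℝ) * (((n:ℝ)-1) * x^(n-2)))) x := by
  match n with
  | 0 => simpa using hasDerivAt_const x 0
  | 1 => simpa using hasDerivAt_const x c
  | (m+2) =>
    have h := (hasDerivAt_pow (m+1) x).const_mul (c * ((m:ℝ)+2))
    have e1 : m + 2 - 1 = m + 1 := rfl
    have e2 : m + 2 - 2 = m := rfl
    have e3 : m + 1 - 1 = m := rfl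
    convert h using 1
    · rfl
    · rfl
    · funext z; rw [e1]; push_cast; ring
    · rw [e2, e3]; push_cast; ring

lemma hasDerivAt_y1 (t : ℝ) : HasDerivAt y1 (y2 t) t := by
  set R := |t| + 1 with hRdef
  have hR : 1 ≤ R := by linarith [abs_nonneg t]
  have ht : t ∈ Ioo (-R) R := by
    constructor <;> [nlinarith [neg_abs_le t]; nlinarith [le_abs_self t]]
  exact hasDerivAt_tsum_of_isPreconnected
    (Real.summable_pow_div_factorial (4*R)) isOpen_Ioo (convex_Ioo _ _).isPreconnected
    (fun n z _ => hasDerivAt_term1 (a n) n z)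
    (fun n z hz => bound_d2 hR (by rw [abs_le]; exact ⟨hz.1.le, hz.2.le⟩) n)
    ht (summable_y1 t) ht

end J0aux

namespace J0aux

lemma a_succ_sq (n : ℕ) : a (n+1) * ((n:ℝ)+1)^2 = -a n := by
  unfold a
  rw [Nat.factorial_succ]
  have h1 : ((Nat.factorial n : ℝ)) ≠ 0 := by positivity
  have h2 : ((n:ℝ)+1) ≠ 0 := by positivity
  push_cast
  field_simp
  ring

lemma summable_E (t : ℝ) : Summable (fun n => a n * ((n:ℝ)^2 * t^(n-1))) := by
  apply Summable.of_norm_bounded (Real.summable_pow_div_factorial (4*(|t|+1)))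
  intro n
  have hR : (1:ℝ) ≤ |t| + 1 := by linarith [abs_nonneg t]
  rw [norm_mul, norm_mul, norm_pow]
  have h1 : ‖a n‖ ≤ 1 / (Nat.factorial n : ℝ) := abs_a_le n
  have h2 : ‖(n:ℝ)‖^2 ≤ 4^n := by rw [Real.norm_natCast]; exact sq_nat_le_four_pow n
  have h3 : ‖t^(n-1)‖ ≤ (|t|+1)^n := by
    rw [norm_pow]; exact pow_pred_le hR (by linarith) 1 n
  calc ‖a n‖ * (‖(n:ℝ)‖^2 * ‖t^(n-1)‖) ≤ (1/(Nat.factorial n:ℝ)) * (4^n * (|t|+1)^n) := by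
        gcongr <;> positivity
    _ = (4*(|t|+1))^n / (Nat.factorial n : ℝ) := by rw [mul_pow]; ring

lemma tsum_E (t : ℝ) : ∑' n, a n * ((n:ℝ)^2 * t^(n-1)) = - y t := by
  rw [Summable.tsum_eq_zero_add (summable_E t)]
  have hstep : ∀ n : ℕ, a (n+1) * (((n+1:ℕ):ℝ)^2 * t^(n+1-1)) = -(a n * t^n) := by
    intro n
    have e : n+1-1 = n := rfl
    rw [e]
    calc a (n+1) * (((n+1:ℕ):ℝ)^2 * t^n) = (a (n+1) * ((n:ℝ)+1)^2) * t^n := by push_cast; ring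
      _ = (-a n) * t^n := by rw [a_succ_sq n]
      _ = -(a n * t^n) := by ring
  rw [tsum_congr hstep, tsum_neg]
  simp [y]

lemma ode (t : ℝ) : t * y2 t + y1 t + y t = 0 := by
  have hS2 : Summable (fun n => t * (a n * ((n:ℝ) * (((n:ℝ)-1) * t^(n-2))))) :=
    (summable_y2 t).mul_left t
  have hS1 := summable_y1 t
  have hS0 := summable_y t
  have hE := summable_E t
  have key : ∀ n : ℕ,
      t * (a n * ((n:ℝ) * (((n:ℝ)-1) * t^(n-2)))) + a n * ((n:ℝ) * t^(n-1)) + a n * t^n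
      = a n * ((n:ℝ)^2 * t^(n-1)) + a n * t^n := by
    intro n
    match n with
    | 0 => norm_num
    | 1 => norm_num
    | (m+2) =>
      have e2 : m+2-2 = m := rfl
      have e1 : m+2-1 = m+1 := rfl
      rw [e1, e2]; push_cast; ring
  have lhs_eq : t * y2 t + y1 t + y t
      = ∑' n, (t * (a n * ((n:ℝ) * (((n:ℝ)-1) * t^(n-2)))) + a n * ((n:ℝ) * t^(n-1)) + a n * t^n) := by
    rw [y, y1, y2, ← tsum_mul_left, ← Summable.tsum_add hS2 hS1, ← Summable.tsum_add (hS2.add hS1) hS0]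
  rw [lhs_eq, tsum_congr key, Summable.tsum_add hE hS0, tsum_E]
  show -y t + y t = 0
  ring

lemma continuous_y : Continuous y :=
  continuous_iff_continuousAt.mpr (fun t => (hasDerivAt_y t).continuousAt)

end J0aux

namespace J0aux

noncomputable def u (x : ℝ) : ℝ := y (x^2/4)
noncomputable def u1 (x : ℝ) : ℝ := x/2 * y1 (x^2/4)
noncomputable def u2 (x : ℝ) : ℝ := -(1/2) * y1 (x^2/4) - y (x^2/4)

lemma hasDerivAt_q (x : ℝ) : HasDerivAt (fun x : ℝ => x^2/4) (x/2) x := by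
  have h := (hasDerivAt_pow 2 x).div_const 4
  convert h using 1
  · rfl
  · rfl
  norm_num; ring

lemma hasDerivAt_u (x : ℝ) : HasDerivAt u (u1 x) x := by
  have h := (hasDerivAt_y (x^2/4)).comp x (hasDerivAt_q x)
  have : u1 x = y1 (x^2/4) * (x/2) := by unfold u1; ring
  rw [this]
  exact h

lemma hasDerivAt_u1 (x : ℝ) : HasDerivAt u1 (u2 x) x := by
  have hy1c := (hasDerivAt_y1 (x^2/4)).comp x (hasDerivAt_q x)
  have h := ((hasDerivAt_id x).div_const 2).mul hy1c
  have hode := ode (x^2/4)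
  have : u2 x = 1/2 * y1 (x^2/4) + x/2 * (y2 (x^2/4) * (x/2)) := by
    unfold u2
    have hx2 : x/2 * (y2 (x^2/4) * (x/2)) = (x^2/4) * y2 (x^2/4) := by ring
    rw [hx2]
    linarith
  rw [this]
  exact h

noncomputable def w (x : ℝ) : ℝ := Real.sqrt x * u x
noncomputable def w1 (x : ℝ) : ℝ := u x / (2 * Real.sqrt x) + Real.sqrt x * u1 x

lemma hasDerivAt_w {x : ℝ} (hx : 0 < x) : HasDerivAt w (w1 x) x := by
  have h := (Real.hasDerivAt_sqrt hx.ne').mul (hasDerivAt_u x)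
  have : w1 x = 1 / (2 * Real.sqrt x) * u x + Real.sqrt x * u1 x := by unfold w1; ring
  rw [this]
  exact h

lemma hasDerivAt_w1 {x : ℝ} (hx : 0 < x) : HasDerivAt w1 (-(1 + 1/(4*x^2)) * w x) x := by
  obtain ⟨S, hS0, rfl⟩ : ∃ S : ℝ, 0 < S ∧ x = S^2 :=
    ⟨Real.sqrt x, Real.sqrt_pos.mpr hx, (Real.sq_sqrt hx.le).symm⟩
  have hSne : S ≠ 0 := hS0.ne'
  have hsq : Real.sqrt (S^2) = S := by
    rw [Real.sqrt_sq hS0.le]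
  have h1 : HasDerivAt (fun x => u x / (2 * Real.sqrt x))
      ((u1 (S^2) * (2*Real.sqrt (S^2)) - u (S^2) * (2 * (1/(2*Real.sqrt (S^2)))))/(2*Real.sqrt (S^2))^2)
      (S^2) :=
    (hasDerivAt_u (S^2)).div ((Real.hasDerivAt_sqrt (by positivity)).const_mul 2)
      (by rw [hsq]; positivity)
  have h2 : HasDerivAt (fun x => Real.sqrt x * u1 x)
      (1/(2*Real.sqrt (S^2)) * u1 (S^2) + Real.sqrt (S^2) * u2 (S^2)) (S^2) :=
    (Real.hasDerivAt_sqrt (by positivity)).mul (hasDerivAt_u1 (S^2))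
  have h := h1.add h2
  have hu2 : u2 (S^2) = -(u1 (S^2)) / (S^2) - u (S^2) := by
    unfold u2 u1 u
    field_simp
  have heq : -(1 + 1/(4*(S^2)^2)) * w (S^2)
      = (u1 (S^2) * (2*Real.sqrt (S^2)) - u (S^2) * (2 * (1/(2*Real.sqrt (S^2)))))/(2*Real.sqrt (S^2))^2
        + (1/(2*Real.sqrt (S^2)) * u1 (S^2) + Real.sqrt (S^2) * u2 (S^2)) := by
    rw [hu2, hsq]
    unfold w
    rw [hsq]
    field_simp
    ring
  rw [heq]
  exact h

noncomputable def FF (x : ℝ) : ℝ := w x^2 + w1 x^2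
noncomputable def HH (x : ℝ) : ℝ := FF x * Real.exp (1/(4*x))

lemma hasDerivAt_F {x : ℝ} (hx : 0 < x) : HasDerivAt FF (-(w x * w1 x)/(2*x^2)) x := by
  have h := ((hasDerivAt_w hx).pow 2).add ((hasDerivAt_w1 hx).pow 2)
  have heq : -(w x * w1 x)/(2*x^2)
      = (2:ℕ) * w x ^ (2-1) * w1 x + (2:ℕ) * w1 x ^ (2-1) * (-(1 + 1/(4*x^2)) * w x) := by
    norm_num
    field_simp
    ring
  rw [heq]
  exact h

lemma hasDerivAt_H {x : ℝ} (hx : 0 < x) :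
    HasDerivAt HH (Real.exp (1/(4*x)) * (-(w x * w1 x)/(2*x^2) - FF x/(4*x^2))) x := by
  have hinv : HasDerivAt (fun x : ℝ => 1/(4*x)) (-(1/(4*x^2))) x := by
    have h := (hasDerivAt_inv hx.ne').const_mul (1/4 : ℝ)
    have e1 : (fun y : ℝ => 1/4 * y⁻¹) = (fun y : ℝ => 1/(4*y)) := by
      funext y; field_simp
    rw [e1] at h
    convert h using 1
    · rfl
    · rfl
    field_simp
  have h := (hasDerivAt_F hx).mul (hinv.exp)
  convert h using 1
  · rfl
  · rfl
  · rfl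
  ring

lemma FF_nonneg (x : ℝ) : 0 ≤ FF x := by unfold FF; positivity

lemma deriv_H_nonpos {x : ℝ} (hx : 0 < x) : deriv HH x ≤ 0 := by
  rw [(hasDerivAt_H hx).deriv]
  have he : (0:ℝ) < Real.exp (1/(4*x)) := Real.exp_pos _
  have h1 : -(w x * w1 x)/(2*x^2) - FF x/(4*x^2) ≤ 0 := by
    rw [div_sub_div _ _ (by positivity : (2*x^2:ℝ) ≠ 0) (by positivity : (4*x^2:ℝ) ≠ 0),
      div_nonpos_iff]
    right
    constructor
    · unfold FF
      nlinarith [mul_nonneg (le_of_lt (by positivity : (0:ℝ) < 2*x^2)) (sq_nonneg (w x + w1 x))]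
    · positivity
  exact mul_nonpos_of_nonneg_of_nonpos he.le h1

lemma F_le {x : ℝ} (hx : 1 ≤ x) : FF x ≤ FF 1 * Real.exp (1/4) := by
  have hanti : AntitoneOn HH (Ici 1) := by
    apply antitoneOn_of_deriv_nonpos (convex_Ici 1)
    · intro z hz
      exact (hasDerivAt_H (by simp at hz; linarith : (0:ℝ) < z)).continuousAt.continuousWithinAt
    · intro z hz
      rw [interior_Ici] at hz
      exact (hasDerivAt_H (by simp at hz; linarith : (0:ℝ) < z)).differentiableAt.differentiableWithinAt
    · intro z hz
      rw [interior_Ici] at hz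
      exact deriv_H_nonpos (by simp at hz; linarith)
  have h1 : HH x ≤ HH 1 := hanti (self_mem_Ici) hx hx
  have h2 : FF x ≤ HH x := by
    unfold HH
    have : (1:ℝ) ≤ Real.exp (1/(4*x)) := by
      rw [← Real.exp_zero]
      apply Real.exp_le_exp.mpr
      positivity
    nlinarith [FF_nonneg x]
  have h3 : HH 1 = FF 1 * Real.exp (1/4) := by unfold HH; norm_num
  linarith

end J0aux

namespace J0aux

noncomputable def C0 : ℝ := FF 1 * Real.exp (1/4)

lemma abs_w_le {x : ℝ} (hx : 1 ≤ x) : |w x| ≤ Real.sqrt C0 := by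
  have h := F_le hx
  have h2 : w x^2 ≤ C0 := by
    unfold C0 FF
    unfold FF at h
    nlinarith [sq_nonneg (w1 x)]
  calc |w x| = Real.sqrt (w x^2) := (Real.sqrt_sq_eq_abs _).symm
    _ ≤ Real.sqrt C0 := Real.sqrt_le_sqrt h2

lemma y_decay {t : ℝ} (ht : 1 ≤ t) : |y t| ≤ Real.sqrt C0 * t^(-(1/4 : ℝ)) := by
  have ht0 : (0:ℝ) < t := by linarith
  have hst : (1:ℝ) ≤ Real.sqrt t := by
    rw [show (1:ℝ) = Real.sqrt 1 by simp]
    exact Real.sqrt_le_sqrt ht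
  set x := 2 * Real.sqrt t with hxdef
  have hx1 : 1 ≤ x := by rw [hxdef]; linarith
  have hq : x^2/4 = t := by
    rw [hxdef, mul_pow, Real.sq_sqrt ht0.le]; ring
  have hw : w x = Real.sqrt x * y t := by unfold w u; rw [hq]
  have hsx : (0:ℝ) < Real.sqrt x := Real.sqrt_pos.mpr (by linarith)
  have h1 : |y t| * Real.sqrt x ≤ Real.sqrt C0 := by
    have := abs_w_le hx1
    rw [hw, abs_mul, abs_of_nonneg hsx.le] at this
    linarith [this]
  have hquarter : Real.sqrt (Real.sqrt t) = t^((1/4:ℝ)) := by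
    rw [Real.sqrt_eq_rpow, Real.sqrt_eq_rpow, ← Real.rpow_mul ht0.le]
    norm_num
  have h2 : t^((1/4:ℝ)) ≤ Real.sqrt x := by
    rw [← hquarter]
    apply Real.sqrt_le_sqrt
    rw [hxdef]; linarith
  have ht4 : (0:ℝ) < t^((1/4:ℝ)) := Real.rpow_pos_of_pos ht0 _
  rw [Real.rpow_neg ht0.le, ← div_eq_mul_inv, le_div_iff₀ ht4]
  calc |y t| * t^((1/4:ℝ)) ≤ |y t| * Real.sqrt x := by
        apply mul_le_mul_of_nonneg_left h2 (abs_nonneg _)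
    _ ≤ Real.sqrt C0 := h1

lemma y_abs_le_exp (t : ℝ) : |y t| ≤ Real.exp |t| := by
  have hsum : Summable (fun n => ‖a n * t^n‖) := by
    apply Summable.of_nonneg_of_le (fun n => norm_nonneg _) _ (Real.summable_pow_div_factorial |t|)
    intro n
    rw [norm_mul, norm_pow]
    calc ‖a n‖ * ‖t‖^n ≤ (1 / (Nat.factorial n : ℝ)) * |t|^n := by
          apply mul_le_mul_of_nonneg_right (abs_a_le n) (by positivity)
      _ = |t|^n / (Nat.factorial n : ℝ) := by ring
  calc |y t| ≤ ∑' n, ‖a n * t^n‖ := norm_tsum_le_tsum_norm hsum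
    _ ≤ ∑' n, |t|^n / (Nat.factorial n : ℝ) := by
        apply Summable.tsum_le_tsum _ hsum (Real.summable_pow_div_factorial |t|)
        intro n
        rw [norm_mul, norm_pow]
        calc ‖a n‖ * ‖t‖^n ≤ (1 / (Nat.factorial n : ℝ)) * |t|^n := by
              apply mul_le_mul_of_nonneg_right (abs_a_le n) (by positivity)
          _ = |t|^n / (Nat.factorial n : ℝ) := by ring
    _ = Real.exp |t| := by
        rw [Real.exp_eq_exp_ℝ, NormedSpace.exp_eq_tsum_div]

noncomputable def M : ℝ := max (Real.exp 1) (Real.sqrt C0)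

lemma M_pos : 0 < M := lt_of_lt_of_le (Real.exp_pos 1) (le_max_left _ _)

lemma y_bounded {t : ℝ} (ht : 0 ≤ t) : |y t| ≤ M := by
  rcases le_or_gt t 1 with h | h
  · calc |y t| ≤ Real.exp |t| := y_abs_le_exp t
      _ ≤ Real.exp 1 := by apply Real.exp_le_exp.mpr; rw [abs_of_nonneg ht]; exact h
      _ ≤ M := le_max_left _ _
  · calc |y t| ≤ Real.sqrt C0 * t^(-(1/4:ℝ)) := y_decay h.le
      _ ≤ Real.sqrt C0 * 1 := by
          apply mul_le_mul_of_nonneg_left _ (Real.sqrt_nonneg _)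
          apply Real.rpow_le_one_of_one_le_of_nonpos h.le (by norm_num)
      _ ≤ M := by rw [mul_one]; exact le_max_right _ _

end J0aux

namespace J0aux

lemma abs_a_eq (n : ℕ) : |a n| = 1 / ((Nat.factorial n : ℝ))^2 := by
  rw [a, abs_div, abs_pow, abs_neg, abs_one, one_pow, abs_of_nonneg (by positivity : (0:ℝ) ≤ ((Nat.factorial n : ℝ))^2)]

lemma integrableOn_pow_exp {p : ℝ} (hp : 0 < p) (n : ℕ) :
    IntegrableOn (fun t : ℝ => t^n * Real.exp (-(p*t))) (Ioi 0) := by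
  have h0 := Real.GammaIntegral_convergent (s := (n+1:ℝ)) (by positivity)
  have h1 : IntegrableOn (fun t : ℝ => Real.exp (-(p*t)) * (p*t) ^ ((n+1:ℝ) - 1)) (Ioi 0) := by
    have := (integrableOn_Ioi_comp_mul_left_iff
      (fun x : ℝ => Real.exp (-x) * x ^ ((n+1:ℝ) - 1)) 0 hp).mpr (by simpa using h0)
    simpa using this
  have h2 := h1.const_mul (p ^ ((n+1:ℝ)-1))⁻¹
  apply MeasureTheory.IntegrableOn.congr_fun h2 _ measurableSet_Ioi
  intro t ht
  have ht0 : (0:ℝ) < t := ht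
  simp only
  rw [Real.mul_rpow hp.le ht0.le, show ((n:ℝ)+1-1) = ((n:ℕ):ℝ) by push_cast; ring,
    Real.rpow_natCast, Real.rpow_natCast]
  have hpn : (p:ℝ)^n ≠ 0 := by positivity
  field_simp

lemma integral_pow_exp {p : ℝ} (hp : 0 < p) (n : ℕ) :
    ∫ t in Ioi (0:ℝ), t^n * Real.exp (-(p*t)) = (Nat.factorial n : ℝ) / p^(n+1) := by
  have h := Real.integral_rpow_mul_exp_neg_mul_Ioi (a := (n+1:ℝ)) (by positivity) hp
  rw [show ((n+1:ℝ)-1) = (n:ℝ) by ring] at h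
  have congr1 : ∫ t in Ioi (0:ℝ), t^n * Real.exp (-(p*t))
      = ∫ t in Ioi (0:ℝ), t^((n:ℝ):ℝ) * Real.exp (-(p*t)) := by
    apply setIntegral_congr_fun measurableSet_Ioi
    intro t ht
    simp [Real.rpow_natCast]
  rw [congr1, h]
  rw [show ((n:ℝ)+1) = ((n:ℕ):ℝ) + 1 by push_cast; ring] at *
  rw [Real.Gamma_nat_eq_factorial]
  rw [show (((n:ℕ):ℝ) + 1) = (((n+1:ℕ)):ℝ) by push_cast; ring, Real.rpow_natCast]
  rw [one_div, inv_pow]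
  field_simp

end J0aux

namespace J0aux

lemma laplace {p : ℝ} (hp : 0 < p) :
    ∫ t in Ioi (0:ℝ), Real.exp (-(p*t)) * y t = Real.exp (-(1/p)) / p := by
  set F : ℕ → ℝ → ℝ := fun n t => a n * (t^n * Real.exp (-(p*t))) with hF
  have hFint : ∀ n, Integrable (F n) (volume.restrict (Ioi 0)) := fun n =>
    ((integrableOn_pow_exp hp n).const_mul (a n))
  have hnormint : ∀ n, (∫ t in Ioi (0:ℝ), ‖F n t‖)
      = |a n| * ((Nat.factorial n : ℝ)/p^(n+1)) := by
    intro n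
    have heq : EqOn (fun t => ‖F n t‖) (fun t => |a n| * (t^n * Real.exp (-(p*t)))) (Ioi 0) := by
      intro t ht
      have ht0 : (0:ℝ) < t := ht
      simp only [hF, Real.norm_eq_abs, abs_mul, abs_pow, abs_of_nonneg ht0.le,
        abs_of_nonneg (Real.exp_pos (-(p*t))).le]
    rw [setIntegral_congr_fun measurableSet_Ioi heq, MeasureTheory.integral_const_mul, integral_pow_exp hp n]
  have hsum : Summable (fun n => ∫ t in Ioi (0:ℝ), ‖F n t‖) := by
    apply Summable.congr _ (fun n => (hnormint n).symm)
    have key : ∀ n, (1/p)^n/(Nat.factorial n : ℝ) * (1/p)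
        = |a n| * ((Nat.factorial n:ℝ)/p^(n+1)) := by
      intro n
      rw [abs_a_eq, div_pow, one_pow]
      have h1 : ((Nat.factorial n : ℝ)) ≠ 0 := by positivity
      field_simp
      ring
    exact Summable.congr ((Real.summable_pow_div_factorial (1/p)).mul_right (1/p)) key
  have htsum_eq : EqOn (fun t => Real.exp (-(p*t)) * y t) (fun t => ∑' n, F n t) (Ioi 0) := by
    intro t _
    simp only [y, ← tsum_mul_left]
    exact tsum_congr fun n => by simp only [hF]; ring
  calc ∫ t in Ioi (0:ℝ), Real.exp (-(p*t)) * y t = ∫ t in Ioi (0:ℝ), ∑' n, F n t :=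
      setIntegral_congr_fun measurableSet_Ioi htsum_eq
    _ = ∑' n, ∫ t in Ioi (0:ℝ), F n t :=
      (integral_tsum_of_summable_integral_norm hFint hsum).symm
    _ = ∑' n, a n * ((Nat.factorial n:ℝ)/p^(n+1)) := by
        refine tsum_congr fun n => ?_
        simp only [hF]
        rw [MeasureTheory.integral_const_mul, integral_pow_exp hp n]
    _ = ∑' n, ((-(1/p))^n/(Nat.factorial n : ℝ)) * (1/p) := by
        refine tsum_congr fun n => ?_
        rw [a]
        have h1 : ((Nat.factorial n : ℝ)) ≠ 0 := by positivity
        rw [show (-(1/p)) = (-1)/p by ring, div_pow]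
        field_simp
        ring
    _ = Real.exp (-(1/p)) / p := by
        rw [tsum_mul_right, Real.exp_eq_exp_ℝ, NormedSpace.exp_eq_tsum_div]
        ring

end J0aux

namespace J0aux

lemma y_isBigO_top : (fun t : ℝ => y t) =O[atTop] (fun t => t ^ (-(1/4):ℝ)) := by
  rw [Asymptotics.isBigO_iff]
  refine ⟨Real.sqrt C0, ?_⟩
  filter_upwards [Filter.eventually_ge_atTop (1:ℝ)] with t ht
  rw [Real.norm_eq_abs, Real.norm_eq_abs, abs_of_nonneg (Real.rpow_nonneg (by linarith) _)]
  exact y_decay ht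

lemma y_isBigO_zero : (fun t : ℝ => y t) =O[nhdsWithin 0 (Ioi 0)] (fun t : ℝ => t ^ (-(0:ℝ))) := by
  rw [Asymptotics.isBigO_iff]
  refine ⟨Real.exp 1, ?_⟩
  filter_upwards [Ioc_mem_nhdsGT_of_mem (by constructor <;> norm_num : (0:ℝ) ∈ Ico (0:ℝ) 1)]
    with t ht
  rw [neg_zero, Real.rpow_zero, Real.norm_eq_abs, Real.norm_eq_abs, abs_one, mul_one]
  calc |y t| ≤ Real.exp |t| := y_abs_le_exp t
    _ ≤ Real.exp 1 := by
        apply Real.exp_le_exp.mpr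
        rw [abs_of_nonneg ht.1.le]; exact ht.2

lemma complex_integrand_intble {s : ℂ} (h1 : 3/4 < s.re) (h2 : s.re < 1) :
    IntegrableOn (fun t : ℝ => (y t : ℂ) * (t:ℂ)^(-s)) (Ioi 0) := by
  have hloc : LocallyIntegrableOn (fun t : ℝ => (y t : ℂ)) (Ioi 0) :=
    (Complex.continuous_ofReal.comp continuous_y).locallyIntegrable.locallyIntegrableOn _
  have htop : (fun t : ℝ => (y t : ℂ)) =O[atTop] (fun t => t ^ (-(1/4):ℝ)) := by
    rw [← Asymptotics.isBigO_norm_left]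
    simp only [Complex.norm_real]
    rw [Asymptotics.isBigO_norm_left]
    exact y_isBigO_top
  have hzero : (fun t : ℝ => (y t : ℂ)) =O[nhdsWithin 0 (Ioi 0)] (fun t : ℝ => t ^ (-(0:ℝ))) := by
    rw [← Asymptotics.isBigO_norm_left]
    simp only [Complex.norm_real]
    rw [Asymptotics.isBigO_norm_left]
    exact y_isBigO_zero
  have h := mellinConvergent_of_isBigO_rpow (s := 1 - s) hloc htop
    (by simp [Complex.sub_re]; linarith) hzero (by simp [Complex.sub_re]; linarith)
  apply MeasureTheory.IntegrableOn.congr_fun h _ measurableSet_Ioi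
  intro t _
  simp only [smul_eq_mul]
  rw [show (1:ℂ) - s - 1 = -s by ring]
  ring

lemma real_integrand_intble {r : ℝ} (h1 : 3/4 < r) (h2 : r < 1) :
    IntegrableOn (fun t : ℝ => t ^ ((1-r)-1) * |y t|) (Ioi 0) := by
  have habs : (fun t : ℝ => |y t|) = (fun t : ℝ => ‖y t‖) :=
    funext fun t => (Real.norm_eq_abs _).symm
  apply mellin_convergent_of_isBigO_scalar (f := fun t => |y t|) (a := 1/4) (b := 0)
  · rw [habs]
    exact (continuous_y.norm.locallyIntegrable).locallyIntegrableOn _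
  · rw [habs, Asymptotics.isBigO_norm_left]
    exact y_isBigO_top
  · linarith
  · rw [habs, Asymptotics.isBigO_norm_left]
    exact y_isBigO_zero
  · linarith

lemma cpow_ne (t : ℝ) (ht : 0 < t) (z : ℂ) : ((t:ℝ):ℂ)^z ≠ 0 := by
  intro h
  rw [Complex.cpow_eq_zero_iff] at h
  exact (Complex.ofReal_ne_zero.mpr ht.ne') h.1

lemma integrable_cpow_exp {t : ℝ} (ht : 0 < t) {z : ℂ} (hz : 0 < z.re) :
    IntegrableOn (fun p : ℝ => (p:ℂ)^(z-1) * (Real.exp (-(t*p)) : ℝ)) (Ioi 0) := by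
  have h0 := Complex.GammaIntegral_convergent hz
  have h1 : IntegrableOn (fun p : ℝ => (Real.exp (-(t*p)) : ℂ) * ((t*p : ℝ):ℂ)^(z-1)) (Ioi 0) := by
    have := (integrableOn_Ioi_comp_mul_left_iff
      (fun x : ℝ => (Real.exp (-x) : ℂ) * ((x:ℝ):ℂ)^(z-1)) 0 ht).mpr (by simpa using h0)
    simpa using this
  have h2 := h1.const_mul (((t:ℝ):ℂ)^(z-1))⁻¹
  apply MeasureTheory.IntegrableOn.congr_fun h2 _ measurableSet_Ioi
  intro p hp
  have hp0 : (0:ℝ) < p := hp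
  simp only
  rw [Complex.ofReal_mul, Complex.mul_cpow_ofReal_nonneg ht.le hp0.le]
  have hne := cpow_ne t ht (z-1)
  field_simp

end J0aux

namespace J0aux

lemma inner_p_integral {t : ℝ} (ht : 0 < t) {z : ℂ} (hz : 0 < z.re) :
    ∫ p in Ioi (0:ℝ), (p:ℂ)^(z-1) * (Real.exp (-(t*p)) : ℝ)
      = (1/(t:ℂ))^z * Complex.Gamma z := by
  rw [← Complex.integral_cpow_mul_exp_neg_mul_Ioi hz ht]
  apply setIntegral_congr_fun measurableSet_Ioi
  intro p _
  simp only
  rw [show -((t:ℂ)*(p:ℂ)) = ((-(t*p):ℝ):ℂ) by push_cast; ring, ← Complex.ofReal_exp]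

lemma inv_gamma {s : ℂ} (hs : s.re < 1) :
    ∫ p in Ioi (0:ℝ), (p:ℂ)^(s-1) * ((Real.exp (-(1/p)) / p : ℝ):ℂ)
      = Complex.Gamma (1-s) := by
  set g : ℝ → ℂ := fun u => (u:ℂ)^(-s) * (Real.exp (-u) : ℝ) with hg
  have hcomp := integral_comp_rpow_Ioi g (p := (-1:ℝ)) (by norm_num)
  have hrhs : ∫ u in Ioi (0:ℝ), g u = Complex.Gamma (1-s) := by
    have h := Complex.integral_cpow_mul_exp_neg_mul_Ioi (a := 1-s) (r := 1)
      (by simp [Complex.sub_re]; linarith) one_pos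
    rw [show ((1:ℂ)/(1:ℝ))^(1-s) = 1 by norm_num, one_mul] at h
    rw [← h]
    apply setIntegral_congr_fun measurableSet_Ioi
    intro u _
    simp only [hg]
    have he : Complex.exp (-(((1:ℝ):ℂ) * (u:ℂ))) = ((Real.exp (-u) : ℝ):ℂ) := by
      rw [Complex.ofReal_exp]
      congr 1
      push_cast
      ring
    rw [show (1:ℂ) - s - 1 = -s by ring, he]
  rw [← hrhs, ← hcomp]
  apply setIntegral_congr_fun measurableSet_Ioi
  intro x hx
  have hx0 : (0:ℝ) < x := hx
  have hxc : ((x:ℝ):ℂ) ≠ 0 := Complex.ofReal_ne_zero.mpr hx0.ne'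
  have harg : ((x:ℝ):ℂ).arg ≠ Real.pi := by
    rw [Complex.arg_ofReal_of_nonneg hx0.le]
    exact Real.pi_ne_zero.symm
  simp only [hg, abs_neg, abs_one, one_mul, Complex.real_smul]
  rw [Real.rpow_neg_one, Complex.ofReal_inv, Complex.inv_cpow _ _ harg,
    Complex.cpow_neg, inv_inv]
  rw [show ((-1:ℝ)-1) = (-2:ℝ) by norm_num]
  rw [show (x:ℝ)^(-2:ℝ) = (x^2)⁻¹ by
    rw [← Real.rpow_natCast x 2, ← Real.rpow_neg hx0.le]; norm_num]
  rw [Complex.cpow_sub _ _ hxc, Complex.cpow_one]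
  push_cast
  have h2 : ((x:ℝ):ℂ)^2 ≠ 0 := pow_ne_zero 2 hxc
  rw [one_div]
  field_simp
end J0aux

namespace J0aux

lemma key_identity {s : ℂ} (h1 : 3/4 < s.re) (h2 : s.re < 1) :
    Complex.Gamma s * (∫ t in Ioi (0:ℝ), (y t:ℂ) * (t:ℂ)^(-s)) = Complex.Gamma (1-s) := by
  have hsre : 0 < s.re := by linarith
  set μ := volume.restrict (Ioi (0:ℝ)) with hμ
  set Φ : ℝ → ℝ → ℂ := fun t p => (y t : ℂ) * ((p:ℂ)^(s-1) * (Real.exp (-(t*p)) : ℝ)) with hΦ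
  have hmeas : AEStronglyMeasurable (Function.uncurry Φ) (μ.prod μ) := by
    rw [hμ, Measure.prod_restrict]
    apply ContinuousOn.aestronglyMeasurable _ (measurableSet_Ioi.prod measurableSet_Ioi)
    apply ContinuousOn.mul
    · exact (Complex.continuous_ofReal.comp (continuous_y.comp continuous_fst)).continuousOn
    apply ContinuousOn.mul
    · intro q hq
      have hq2 : (0:ℝ) < q.2 := hq.2
      have hc : ContinuousAt (fun v : ℝ => (v:ℂ)^(s-1)) q.2 :=
        Complex.continuousAt_ofReal_cpow_const _ _ (Or.inr hq2.ne')
      exact (hc.comp continuous_snd.continuousAt).continuousWithinAt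
    · apply Continuous.continuousOn
      apply Complex.continuous_ofReal.comp
      exact Real.continuous_exp.comp (continuous_fst.mul continuous_snd).neg
  have hB1 : ∀ᵐ t ∂μ, Integrable (fun p => Φ t p) μ := by
    rw [hμ, ae_restrict_iff' measurableSet_Ioi]
    filter_upwards with t ht
    exact (integrable_cpow_exp ht hsre).const_mul _
  have hnorm_eq : ∀ t ∈ Ioi (0:ℝ), (∫ p, ‖Φ t p‖ ∂μ)
      = Real.Gamma s.re * (t ^ (((1:ℝ)-s.re)-1) * |y t|) := by
    intro t ht
    have hptwise : ∀ p ∈ Ioi (0:ℝ), ‖Φ t p‖ = |y t| * (p ^ (s.re - 1) * Real.exp (-(t*p))) := by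
      intro p hp
      have hp0 : (0:ℝ) < p := hp
      simp only [hΦ]
      rw [norm_mul, norm_mul, Complex.norm_real, Complex.norm_real, Real.norm_eq_abs,
        Real.norm_eq_abs, abs_of_nonneg (Real.exp_pos _).le,
        Complex.norm_cpow_eq_rpow_re_of_pos hp0]
      norm_num [Complex.sub_re]
    rw [show (∫ p, ‖Φ t p‖ ∂μ) = ∫ p in Ioi (0:ℝ), |y t| * (p ^ (s.re-1) * Real.exp (-(t*p))) from
      setIntegral_congr_fun measurableSet_Ioi hptwise]
    rw [MeasureTheory.integral_const_mul, Real.integral_rpow_mul_exp_neg_mul_Ioi hsre ht]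
    rw [one_div, Real.inv_rpow (le_of_lt ht), ← Real.rpow_neg (le_of_lt ht)]
    rw [show ((1:ℝ)-s.re)-1 = -s.re by ring]
    ring
  have hB2 : Integrable (fun t => ∫ p, ‖Φ t p‖ ∂μ) μ := by
    apply Integrable.congr ((real_integrand_intble h1 h2).const_mul (Real.Gamma s.re))
    rw [hμ]
    apply (ae_restrict_iff' measurableSet_Ioi).mpr
    filter_upwards with t ht
    exact (hnorm_eq t ht).symm
  have hprodInt : Integrable (Function.uncurry Φ) (μ.prod μ) :=
    (integrable_prod_iff hmeas).mpr ⟨hB1, hB2⟩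
  have hswap : (∫ t, (∫ p, Φ t p ∂μ) ∂μ) = ∫ p, (∫ t, Φ t p ∂μ) ∂μ :=
    integral_integral_swap hprodInt
  have hLHS : (∫ t, (∫ p, Φ t p ∂μ) ∂μ)
      = Complex.Gamma s * ∫ t in Ioi (0:ℝ), (y t:ℂ)*(t:ℂ)^(-s) := by
    have heval : ∀ t ∈ Ioi (0:ℝ), (∫ p, Φ t p ∂μ)
        = Complex.Gamma s * ((y t:ℂ) * (t:ℂ)^(-s)) := by
      intro t ht
      have ht0 : (0:ℝ) < t := ht
      simp only [hΦ]
      rw [hμ, MeasureTheory.integral_const_mul, inner_p_integral ht0 hsre]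
      have harg : ((t:ℝ):ℂ).arg ≠ Real.pi := by
        rw [Complex.arg_ofReal_of_nonneg ht0.le]
        exact Real.pi_ne_zero.symm
      rw [show (1:ℂ)/(t:ℂ) = ((t:ℂ))⁻¹ by rw [one_div], Complex.inv_cpow _ _ harg,
        ← Complex.cpow_neg]
      ring
    rw [hμ]
    rw [setIntegral_congr_fun measurableSet_Ioi heval]
    exact MeasureTheory.integral_const_mul _ _
  have hRHS : (∫ p, (∫ t, Φ t p ∂μ) ∂μ) = Complex.Gamma (1-s) := by
    have heval : ∀ p ∈ Ioi (0:ℝ), (∫ t, Φ t p ∂μ)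
        = (p:ℂ)^(s-1) * ((Real.exp (-(1/p))/p : ℝ):ℂ) := by
      intro p hp
      have hp0 : (0:ℝ) < p := hp
      have hpt : ∀ t : ℝ, Φ t p = (p:ℂ)^(s-1) * ((Real.exp (-(p*t)) * y t : ℝ):ℂ) := by
        intro t
        simp only [hΦ]
        rw [mul_comm t p]
        push_cast
        ring
      calc (∫ t, Φ t p ∂μ) = ∫ t, (p:ℂ)^(s-1) * ((Real.exp (-(p*t)) * y t : ℝ):ℂ) ∂μ :=
            integral_congr_ae (Filter.Eventually.of_forall hpt)
        _ = (p:ℂ)^(s-1) * ∫ t, ((Real.exp (-(p*t)) * y t : ℝ):ℂ) ∂μ :=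
            MeasureTheory.integral_const_mul _ _
        _ = (p:ℂ)^(s-1) * ((∫ t, Real.exp (-(p*t)) * y t ∂μ : ℝ):ℂ) := by
            congr 1
            exact integral_ofReal (𝕜 := ℂ)
        _ = (p:ℂ)^(s-1) * ((Real.exp (-(1/p))/p : ℝ):ℂ) := by
            rw [hμ, laplace hp0]
    rw [hμ, setIntegral_congr_fun measurableSet_Ioi heval]
    exact inv_gamma h2
  rw [← hLHS, hswap, hRHS]

end J0aux


namespace J0aux

lemma y_eq_J0sq (t : ℝ) : y t = J0sq t :=
  tsum_congr fun n => by rw [a]; ring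

end J0aux

theorem mellin_J0_eq_gamma_ratio (s : ℂ) (h1 : 3/4 < s.re) (h2 : s.re < 1) :
    IntegrableOn (fun t : ℝ => (J0sq t : ℂ) * (t : ℂ) ^ (-s)) (Set.Ioi 0) ∧
    ∫ t in Set.Ioi (0:ℝ), (J0sq t : ℂ) * (t : ℂ) ^ (-s)
      = Complex.Gamma (1 - s) / Complex.Gamma s := by
  have hfun : (fun t : ℝ => (J0sq t : ℂ) * (t : ℂ) ^ (-s))
      = (fun t : ℝ => (J0aux.y t : ℂ) * (t : ℂ) ^ (-s)) := by
    funext t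
    rw [J0aux.y_eq_J0sq]
  constructor
  · rw [hfun]
    exact J0aux.complex_integrand_intble h1 h2
  · rw [hfun]
    have hkey := J0aux.key_identity h1 h2
    have hGs : Complex.Gamma s ≠ 0 := Complex.Gamma_ne_zero_of_re_pos (by linarith)
    field_simp
    linear_combination hkey
end

section
/- For all a, b ≥ 0 and x ≥ 0: (a+b) J_1(2√((a+b)x))/√((a+b)x) = a J_1(2√(ax))/√(ax) + b J_1(2√(bx))/√(bx) − ∫_0^x (a J_1(2√(ay))/√(ay)) · (b J_1(2√(b(x−y)))/√(b(x−y))) dy, where the expressions are interpreted via the entire power series c J_1(2√(cu))/√(cu) = ∑_{n≥0} (-1)^n c^{n+1} u^n/(n!(n+1)!). -/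
open MeasureTheory intervalIntegral

/-- `j1 c u = c J₁(2√(cu))/√(cu) = ∑ (-1)ⁿ cⁿ⁺¹ uⁿ/(n!(n+1)!)`. -/
noncomputable def j1 (c u : ℝ) : ℝ :=
  ∑' n : ℕ, (-1)^n * c^(n+1) * u^n / ((Nat.factorial n : ℝ) * (Nat.factorial (n+1) : ℝ))

/-- The `n`-th term of the series defining `j1`. -/
noncomputable def j1t (c : ℝ) (n : ℕ) (u : ℝ) : ℝ :=
  (-1)^n * c^(n+1) * u^n / ((Nat.factorial n : ℝ) * (Nat.factorial (n+1) : ℝ))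

lemma j1_eq_tsum (c u : ℝ) : j1 c u = ∑' n, j1t c n u := rfl

lemma continuous_j1t (c : ℝ) (n : ℕ) : Continuous (fun u => j1t c n u) :=
  (continuous_const.mul (continuous_pow n)).div_const _

lemma norm_j1t_le (c : ℝ) {u U : ℝ} (hU : |u| ≤ U) (n : ℕ) :
    ‖j1t c n u‖ ≤ |c| * (|c| * U)^n / (Nat.factorial n : ℝ) := by
  have h0 : (0:ℝ) ≤ U := le_trans (abs_nonneg u) hU
  have h1 : ‖j1t c n u‖ = |c|^(n+1) * |u|^n / ((Nat.factorial n : ℝ) * (Nat.factorial (n+1) : ℝ)) := by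
    rw [Real.norm_eq_abs, j1t, abs_div, abs_mul, abs_mul, abs_pow, abs_pow, abs_pow, abs_neg, abs_one,
      one_pow, one_mul, abs_of_nonneg (show (0:ℝ) ≤ (Nat.factorial n : ℝ) * (Nat.factorial (n+1) : ℝ) by positivity)]
  rw [h1]
  have h2 : |c| * (|c| * U)^n / (Nat.factorial n : ℝ)
      = |c|^(n+1) * U^n / ((Nat.factorial n : ℝ) * 1) := by
    rw [mul_pow]; ring
  rw [h2]
  have hfac : (1:ℝ) ≤ (Nat.factorial (n+1) : ℝ) := by
    exact_mod_cast Nat.one_le_iff_ne_zero.mpr (Nat.factorial_ne_zero (n+1))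
  gcongr

lemma summable_norm_j1t (c u : ℝ) : Summable fun n => ‖j1t c n u‖ := by
  refine Summable.of_nonneg_of_le (fun n => norm_nonneg _) (norm_j1t_le c (le_refl |u|)) ?_
  simpa [mul_div_assoc] using (Real.summable_pow_div_factorial (|c| * |u|)).mul_left |c|

lemma summable_j1t (c u : ℝ) : Summable fun n => j1t c n u :=
  (summable_norm_j1t c u).of_norm

lemma integral_pow_mul_sub_pow (m n : ℕ) {x : ℝ} :
    ∫ y in (0:ℝ)..x, y^m * (x - y)^n =
      x^(m+n+1) * (Nat.factorial m : ℝ) * (Nat.factorial n : ℝ) / (Nat.factorial (m+n+1) : ℝ) := by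
  induction n generalizing m with
  | zero =>
    simp only [pow_zero, mul_one, integral_pow, Nat.add_zero, Nat.factorial_succ, Nat.factorial]
    have hm : ((m:ℝ)+1) ≠ 0 := by positivity
    have hmf : (Nat.factorial m : ℝ) ≠ 0 := by exact_mod_cast Nat.factorial_ne_zero m
    push_cast
    field_simp
    ring
  | succ n ih =>
    have hu : ∀ y ∈ Set.uIcc (0:ℝ) x, HasDerivAt (fun y => (x - y)^(n+1))
        (-(((n:ℝ)+1) * (x - y)^n)) y := by
      intro y _
      have h := ((hasDerivAt_id y).const_sub x).fun_pow (n+1)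
      simpa [mul_comm, mul_assoc] using h
    have hv : ∀ y ∈ Set.uIcc (0:ℝ) x, HasDerivAt (fun y => y^(m+1) / ((m:ℝ)+1)) (y^m) y := by
      intro y _
      have h := (hasDerivAt_pow (m+1) y).div_const ((m:ℝ)+1)
      have hm : ((m:ℝ)+1) ≠ 0 := by positivity
      simpa [mul_div_assoc, mul_div_cancel_left₀ _ hm] using h
    have hu' : IntervalIntegrable (fun y => -(((n:ℝ)+1) * (x - y)^n)) volume 0 x :=
      ((continuous_const.mul ((continuous_const.sub continuous_id).pow n)).neg).intervalIntegrable 0 x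
    have hv' : IntervalIntegrable (fun y : ℝ => y^m) volume 0 x :=
      (continuous_pow m).intervalIntegrable 0 x
    have H := integral_mul_deriv_eq_deriv_mul hu hv hu' hv'
    have hcomm : (∫ y in (0:ℝ)..x, y^m * (x - y)^(n+1))
        = ∫ y in (0:ℝ)..x, (x - y)^(n+1) * y^m := by
      simp_rw [mul_comm]
    have hre : ∀ y : ℝ, -(((n:ℝ)+1) * (x - y)^n) * (y^(m+1) / ((m:ℝ)+1))
        = (-(((n:ℝ)+1) / ((m:ℝ)+1))) * (y^(m+1) * (x - y)^n) := by
      intro y; ring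
    rw [hcomm, H]
    simp_rw [hre]
    rw [intervalIntegral.integral_const_mul, ih (m+1)]
    have e1 : m + 1 + n + 1 = m + (n+1) + 1 := by omega
    rw [e1]
    have hm : ((m:ℝ)+1) ≠ 0 := by positivity
    have hf : (Nat.factorial (m + (n+1) + 1) : ℝ) ≠ 0 := by
      exact_mod_cast Nat.factorial_ne_zero _
    rw [Nat.factorial_succ n, Nat.factorial_succ m]
    push_cast
    field_simp
    ring

/-- The coefficient arising from `∫₀ˣ j1t a m y · j1t b n (x-y) dy`. -/
noncomputable def Kt (a b x : ℝ) (p : ℕ × ℕ) : ℝ :=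
  (-1)^(p.1+p.2) * a^(p.1+1) * b^(p.2+1) * x^(p.1+p.2+1) /
    ((Nat.factorial (p.1+1) : ℝ) * (Nat.factorial (p.2+1) : ℝ) * (Nat.factorial (p.1+p.2+1) : ℝ))

lemma integral_j1t_mul (a b x : ℝ) (m n : ℕ) :
    ∫ y in (0:ℝ)..x, j1t a m y * j1t b n (x - y) = Kt a b x (m, n) := by
  have h : ∀ y : ℝ, j1t a m y * j1t b n (x - y)
      = ((-1)^m * a^(m+1) * ((-1)^n * b^(n+1)) /
          ((Nat.factorial m : ℝ) * (Nat.factorial (m+1) : ℝ) *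
            ((Nat.factorial n : ℝ) * (Nat.factorial (n+1) : ℝ)))) * (y^m * (x - y)^n) := by
    intro y; unfold j1t; ring
  simp_rw [h]
  rw [intervalIntegral.integral_const_mul, integral_pow_mul_sub_pow m n]
  unfold Kt
  have h1 : (Nat.factorial m : ℝ) ≠ 0 := by exact_mod_cast Nat.factorial_ne_zero m
  have h2 : (Nat.factorial n : ℝ) ≠ 0 := by exact_mod_cast Nat.factorial_ne_zero n
  have h3 : (Nat.factorial (m+1) : ℝ) ≠ 0 := by exact_mod_cast Nat.factorial_ne_zero _
  have h4 : (Nat.factorial (n+1) : ℝ) ≠ 0 := by exact_mod_cast Nat.factorial_ne_zero _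
  have h5 : (Nat.factorial (m+n+1) : ℝ) ≠ 0 := by exact_mod_cast Nat.factorial_ne_zero _
  field_simp
  ring

lemma norm_Kt_le (a b x : ℝ) (p : ℕ × ℕ) :
    ‖Kt a b x p‖ ≤ ((|a| * (|a| * |x|)^p.1 / (Nat.factorial p.1 : ℝ)) *
      (|b| * (|b| * |x|)^p.2 / (Nat.factorial p.2 : ℝ))) * |x| := by
  obtain ⟨m, n⟩ := p
  have h1 : (Nat.factorial m : ℝ) ≠ 0 := by exact_mod_cast Nat.factorial_ne_zero m
  have h2 : (Nat.factorial n : ℝ) ≠ 0 := by exact_mod_cast Nat.factorial_ne_zero n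
  have hN : ‖Kt a b x (m, n)‖ = (|a|^(m+1) * |b|^(n+1) * |x|^(m+n+1)) /
      ((Nat.factorial (m+1) : ℝ) * (Nat.factorial (n+1) : ℝ) * (Nat.factorial (m+n+1) : ℝ)) := by
    rw [Real.norm_eq_abs, Kt, abs_div, abs_mul, abs_mul, abs_mul, abs_pow, abs_pow, abs_pow,
      abs_pow, abs_neg, abs_one, one_pow, one_mul,
      abs_of_nonneg (show (0:ℝ) ≤ (Nat.factorial (m+1) : ℝ) * (Nat.factorial (n+1) : ℝ) *
        (Nat.factorial (m+n+1) : ℝ) by positivity)]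
  have hR : ((|a| * (|a| * |x|)^m / (Nat.factorial m : ℝ)) *
      (|b| * (|b| * |x|)^n / (Nat.factorial n : ℝ))) * |x|
      = (|a|^(m+1) * |b|^(n+1) * |x|^(m+n+1)) /
        ((Nat.factorial m : ℝ) * (Nat.factorial n : ℝ) * 1) := by
    rw [mul_pow, mul_pow]
    field_simp
    ring
  rw [hN, hR]
  have hle : ((Nat.factorial m) * (Nat.factorial n) * 1 : ℕ)
      ≤ (Nat.factorial (m+1)) * (Nat.factorial (n+1)) * (Nat.factorial (m+n+1)) :=
    Nat.mul_le_mul (Nat.mul_le_mul (Nat.factorial_le (Nat.le_succ m))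
      (Nat.factorial_le (Nat.le_succ n))) (Nat.one_le_iff_ne_zero.mpr (Nat.factorial_ne_zero _))
  have hle' : ((Nat.factorial m : ℝ) * (Nat.factorial n : ℝ) * 1)
      ≤ (Nat.factorial (m+1) : ℝ) * (Nat.factorial (n+1) : ℝ) * (Nat.factorial (m+n+1) : ℝ) := by
    exact_mod_cast hle
  gcongr

lemma summable_B (a b x : ℝ) :
    Summable fun p : ℕ × ℕ => (|a| * (|a| * |x|)^p.1 / (Nat.factorial p.1 : ℝ)) *
      (|b| * (|b| * |x|)^p.2 / (Nat.factorial p.2 : ℝ)) :=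
  Summable.mul_of_nonneg
    (f := fun k : ℕ => |a| * (|a| * |x|)^k / (Nat.factorial k : ℝ))
    (g := fun k : ℕ => |b| * (|b| * |x|)^k / (Nat.factorial k : ℝ))
    (by simpa [mul_div_assoc] using (Real.summable_pow_div_factorial (|a| * |x|)).mul_left |a|)
    (by simpa [mul_div_assoc] using (Real.summable_pow_div_factorial (|b| * |x|)).mul_left |b|)
    (fun k => by positivity) (fun k => by positivity)

lemma summable_Kt (a b x : ℝ) : Summable (Kt a b x) := by
  apply Summable.of_norm
  exact Summable.of_nonneg_of_le (fun p => norm_nonneg _) (norm_Kt_le a b x)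
    ((summable_B a b x).mul_right |x|)

lemma tsum_prod_antidiagonal {F : ℕ × ℕ → ℝ} (h : Summable F) :
    ∑' p : ℕ × ℕ, F p = ∑' n : ℕ, ∑ kl ∈ Finset.HasAntidiagonal.antidiagonal n, F kl := by
  rw [← Finset.HasAntidiagonal.sigmaAntidiagonalEquivProd.tsum_eq F]
  conv_rhs => congr; ext; rw [← Finset.sum_finset_coe, ← tsum_fintype (L := .unconditional _)]
  exact Summable.tsum_sigma' (fun n => (hasSum_fintype _).summable)
    (Finset.HasAntidiagonal.sigmaAntidiagonalEquivProd.summable_iff.mpr h)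

lemma binom_mid (a b : ℝ) (N : ℕ) :
    (a+b)^(N+2) - a^(N+2) - b^(N+2)
      = ∑ i ∈ Finset.range (N+1), a^(i+1) * b^(N+1-i) * ((N+2).choose (i+1) : ℝ) := by
  rw [add_pow]
  rw [Finset.sum_range_succ, Finset.sum_range_succ']
  simp [Nat.choose_self, Nat.choose_zero_right, Nat.succ_sub_succ]

lemma key_term (a b x : ℝ) (N : ℕ) :
    j1t (a+b) (N+1) x - j1t a (N+1) x - j1t b (N+1) x
      = -∑ kl ∈ Finset.HasAntidiagonal.antidiagonal N, Kt a b x kl := by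
  rw [Finset.Nat.sum_antidiagonal_eq_sum_range_succ_mk]
  have hL : j1t (a+b) (N+1) x - j1t a (N+1) x - j1t b (N+1) x
      = ((-1)^(N+1) * ((a+b)^(N+2) - a^(N+2) - b^(N+2)) * x^(N+1)) /
        ((Nat.factorial (N+1) : ℝ) * (Nat.factorial (N+2) : ℝ)) := by
    unfold j1t
    ring
  rw [hL, binom_mid, Finset.mul_sum, Finset.sum_mul, Finset.sum_div, ← Finset.sum_neg_distrib]
  apply Finset.sum_congr rfl
  intro i hi
  have hiN : i ≤ N := Nat.lt_succ_iff.mp (Finset.mem_range.mp hi)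
  have h1 : i + (N - i) = N := Nat.add_sub_cancel' hiN
  have h2 : (N - i) + 1 = N + 1 - i := by omega
  unfold Kt
  simp only
  rw [h1, h2]
  have hfne : ∀ k : ℕ, (Nat.factorial k : ℝ) ≠ 0 := fun k => by
    exact_mod_cast Nat.factorial_ne_zero k
  have hC : (((N+2).choose (i+1) : ℕ) : ℝ)
      = (Nat.factorial (N+2) : ℝ) / ((Nat.factorial (i+1) : ℝ) * (Nat.factorial (N+1-i) : ℝ)) := by
    rw [eq_div_iff (by positivity)]
    have hle : i + 1 ≤ N + 2 := by omega
    have := Nat.choose_mul_factorial_mul_factorial hle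
    have h3 : N + 2 - (i + 1) = N + 1 - i := by omega
    rw [h3] at this
    have h4 : (((N+2).choose (i+1) * Nat.factorial (i+1) * Nat.factorial (N+1-i) : ℕ) : ℝ)
        = (Nat.factorial (N+2) : ℝ) := by exact_mod_cast congrArg (Nat.cast (R := ℝ)) this
    push_cast at h4 ⊢
    linarith [h4]
  rw [hC]
  field_simp
  ring

theorem j1_addition_formula (a b x : ℝ) (ha : 0 ≤ a) (hb : 0 ≤ b) (hx : 0 ≤ x) :
    j1 (a + b) x = j1 a x + j1 b x - ∫ y in (0:ℝ)..x, j1 a y * j1 b (x - y) := by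
  -- Step 1: compute the integral as a double series
  have hF_cont : ∀ p : ℕ × ℕ, Continuous (fun y => j1t a p.1 y * j1t b p.2 (x - y)) :=
    fun p => (continuous_j1t a p.1).mul
      ((continuous_j1t b p.2).comp (continuous_const.sub continuous_id))
  have hF_int : ∀ p : ℕ × ℕ,
      IntegrableOn (fun y => j1t a p.1 y * j1t b p.2 (x - y)) (Set.Ioc 0 x) volume :=
    fun p => (hF_cont p).integrableOn_Ioc
  have hbound : ∀ p : ℕ × ℕ, ∀ y ∈ Set.Ioc (0:ℝ) x,
      ‖j1t a p.1 y * j1t b p.2 (x - y)‖ ≤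
        (|a| * (|a| * |x|)^p.1 / (Nat.factorial p.1 : ℝ)) *
          (|b| * (|b| * |x|)^p.2 / (Nat.factorial p.2 : ℝ)) := by
    intro p y hy
    have hy1 : |y| ≤ |x| := by
      rw [abs_of_pos hy.1, abs_of_nonneg hx]; exact hy.2
    have hy2 : |x - y| ≤ |x| := by
      rw [abs_of_nonneg (by linarith [hy.2] : (0:ℝ) ≤ x - y), abs_of_nonneg hx]
      linarith [hy.1]
    rw [norm_mul]
    exact mul_le_mul (norm_j1t_le a hy1 p.1) (norm_j1t_le b hy2 p.2) (norm_nonneg _)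
      (by positivity)
  have hintnorm : Summable fun p : ℕ × ℕ =>
      ∫ y in Set.Ioc (0:ℝ) x, ‖j1t a p.1 y * j1t b p.2 (x - y)‖ := by
    refine Summable.of_nonneg_of_le (fun p => integral_nonneg fun y => norm_nonneg _)
      (fun p => ?_) ((summable_B a b x).mul_right x)
    calc (∫ y in Set.Ioc (0:ℝ) x, ‖j1t a p.1 y * j1t b p.2 (x - y)‖)
        ≤ ∫ _ in Set.Ioc (0:ℝ) x,
            ((|a| * (|a| * |x|)^p.1 / (Nat.factorial p.1 : ℝ)) *
              (|b| * (|b| * |x|)^p.2 / (Nat.factorial p.2 : ℝ))) := by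
          refine setIntegral_mono_on (hF_int p).norm ?_ measurableSet_Ioc (hbound p)
          exact integrableOn_const (by simp [Real.volume_Ioc])
      _ = (|a| * (|a| * |x|)^p.1 / (Nat.factorial p.1 : ℝ)) *
            (|b| * (|b| * |x|)^p.2 / (Nat.factorial p.2 : ℝ)) * x := by
          rw [setIntegral_const, Real.volume_real_Ioc_of_le hx, smul_eq_mul]
          ring
  have hI : (∫ y in (0:ℝ)..x, j1 a y * j1 b (x - y))
      = ∑' N : ℕ, ∑ kl ∈ Finset.HasAntidiagonal.antidiagonal N, Kt a b x kl := by
    rw [intervalIntegral.integral_of_le hx]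
    have hpt : ∀ y : ℝ, j1 a y * j1 b (x - y)
        = ∑' p : ℕ × ℕ, j1t a p.1 y * j1t b p.2 (x - y) := by
      intro y
      rw [j1_eq_tsum, j1_eq_tsum]
      exact tsum_mul_tsum_of_summable_norm (summable_norm_j1t a y) (summable_norm_j1t b (x - y))
    simp_rw [hpt]
    rw [← MeasureTheory.integral_tsum_of_summable_integral_norm hF_int hintnorm]
    have hval : ∀ p : ℕ × ℕ,
        (∫ y in Set.Ioc (0:ℝ) x, j1t a p.1 y * j1t b p.2 (x - y)) = Kt a b x p := by
      intro p
      rw [← intervalIntegral.integral_of_le hx]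
      exact integral_j1t_mul a b x p.1 p.2
    simp_rw [hval]
    exact tsum_prod_antidiagonal (summable_Kt a b x)
  rw [hI]
  -- Step 2: series algebra via the binomial theorem
  have hsa := summable_j1t a x
  have hsb := summable_j1t b x
  have hsab := summable_j1t (a+b) x
  have hE : Summable (fun n => j1t (a+b) n x - j1t a n x - j1t b n x) := (hsab.sub hsa).sub hsb
  have h1 : j1 (a+b) x = j1 a x + j1 b x
      + ∑' n, (j1t (a+b) n x - j1t a n x - j1t b n x) := by
    rw [j1_eq_tsum (a+b) x, j1_eq_tsum a x, j1_eq_tsum b x,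
      ← Summable.tsum_add hsa hsb, ← Summable.tsum_add (hsa.add hsb) hE]
    congr 1; funext n; ring
  rw [h1]
  have h2 : (∑' n, (j1t (a+b) n x - j1t a n x - j1t b n x))
      = - ∑' N : ℕ, ∑ kl ∈ Finset.HasAntidiagonal.antidiagonal N, Kt a b x kl := by
    rw [Summable.tsum_eq_zero_add hE]
    have h0 : j1t (a+b) 0 x - j1t a 0 x - j1t b 0 x = 0 := by
      simp [j1t]
    rw [h0, zero_add]
    simp_rw [key_term a b x]
    rw [tsum_neg]
  rw [h2]
  ring
end

section
/- For all a, b and x (as entire functions): J_0(2√((a+b)x)) = J_0(2√(ax)) − ∫_0^x J_0(2√(ay)) · (b J_1(2√(b(x−y)))/√(b(x−y))) dy. -/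
open MeasureTheory

/-- `J0c u = J₀(2√u) = ∑ (-1)ⁿ uⁿ/(n!)²` (entire). -/
noncomputable def J0c (u : ℂ) : ℂ := ∑' n : ℕ, (-1)^n * u^n / ((Nat.factorial n : ℂ))^2

/-- `j1c c u = c J₁(2√(cu))/√(cu) = ∑ (-1)ⁿ cⁿ⁺¹ uⁿ/(n!(n+1)!)` (entire). -/
noncomputable def j1c (c u : ℂ) : ℂ :=
  ∑' n : ℕ, (-1)^n * c^(n+1) * u^n / ((Nat.factorial n : ℂ) * (Nat.factorial (n+1) : ℂ))

open Nat Finset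

namespace J0aux

/-- Coefficients of `J₀`-type series. -/
noncomputable def cJ (u : ℂ) (n : ℕ) : ℂ := (-1)^n * u^n / ((Nat.factorial n : ℂ))^2

/-- Coefficients of the `j1c` series (in the variable `x` with scaling `b`). -/
noncomputable def dJ (b x : ℂ) (m : ℕ) : ℂ :=
  (-1)^m * b^(m+1) * x^m / ((Nat.factorial m : ℂ) * (Nat.factorial (m+1) : ℂ))

lemma J0c_eq_tsum_cJ (u : ℂ) : J0c u = ∑' n : ℕ, cJ u n := rfl

lemma J0c_expand (u t : ℂ) : J0c (u * t) = ∑' n : ℕ, cJ u n * t^n := by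
  rw [J0c]
  exact tsum_congr fun n => by simp only [cJ]; ring

lemma j1c_expand (b x s : ℂ) : j1c b (s * x) = ∑' m : ℕ, dJ b x m * s^m := by
  rw [j1c]
  exact tsum_congr fun m => by simp only [dJ]; ring

lemma summable_cJ_norm (u : ℂ) : Summable fun n : ℕ => ‖cJ u n‖ := by
  apply Summable.of_nonneg_of_le (fun n => norm_nonneg _) _
    (Real.summable_pow_div_factorial ‖u‖)
  intro n
  have h1 : (1:ℝ) ≤ (n ! : ℝ) := Nat.one_le_cast.2 n.factorial_pos
  have : ‖cJ u n‖ = ‖u‖^n / ((n ! : ℝ))^2 := by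
    simp [cJ, norm_div, norm_mul, norm_pow]
  rw [this]
  apply div_le_div_of_nonneg_left (by positivity) (by positivity)
  exact le_self_pow₀ h1 two_ne_zero

lemma summable_dJ_norm (b x : ℂ) : Summable fun m : ℕ => ‖dJ b x m‖ := by
  apply Summable.of_nonneg_of_le (fun n => norm_nonneg _) _
    ((Real.summable_pow_div_factorial (‖b‖ * ‖x‖)).mul_left ‖b‖)
  intro m
  have h1 : (1:ℝ) ≤ ((m+1)! : ℝ) := Nat.one_le_cast.2 (m+1).factorial_pos
  have h2 : (0:ℝ) < (m ! : ℝ) := by exact_mod_cast m.factorial_pos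
  have heq : ‖dJ b x m‖ = ‖b‖ * (‖b‖ * ‖x‖)^m / ((m ! : ℝ) * ((m+1)! : ℝ)) := by
    simp [dJ, norm_div, norm_mul, norm_pow]
    ring
  rw [heq, mul_div_assoc]
  refine mul_le_mul_of_nonneg_left ?_ (norm_nonneg b)
  apply div_le_div_of_nonneg_left (by positivity) h2
  exact le_mul_of_one_le_right h2.le h1

/-- The beta integral with natural exponents. -/
lemma beta_nat (n m : ℕ) :
    (∫ t in (0:ℝ)..1, (t:ℂ)^n * ((1:ℂ) - (t:ℂ))^m)
      = (n ! : ℂ) * (m ! : ℂ) / (((n + m + 1)! : ℕ) : ℂ) := by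
  have h : (∫ t in (0:ℝ)..1, (t:ℂ)^n * ((1:ℂ) - (t:ℂ))^m)
      = Complex.betaIntegral (n+1) (m+1) := by
    rw [Complex.betaIntegral]
    refine intervalIntegral.integral_congr fun t ht => ?_
    rw [add_sub_cancel_right, add_sub_cancel_right, Complex.cpow_natCast, Complex.cpow_natCast]
  rw [h]
  have h2 := Complex.Gamma_mul_Gamma_eq_betaIntegral
    (s := (n:ℂ)+1) (t := (m:ℂ)+1) (by simp; positivity) (by simp; positivity)
  have hG : Complex.Gamma ((n:ℂ)+1+((m:ℂ)+1)) = (((n+m+1)! : ℕ) : ℂ) := by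
    have : ((n:ℂ)+1+((m:ℂ)+1)) = ((n+m+1 : ℕ):ℂ) + 1 := by push_cast; ring
    rw [this, Complex.Gamma_nat_eq_factorial]
  rw [hG, Complex.Gamma_nat_eq_factorial, Complex.Gamma_nat_eq_factorial] at h2
  have hne : (((n+m+1)! : ℕ) : ℂ) ≠ 0 := Nat.cast_ne_zero.2 (Nat.factorial_ne_zero _)
  rw [eq_div_iff hne]
  linear_combination -h2

/-- Regrouping a summable double series by antidiagonals. -/
lemma tsum_antidiag {h : ℕ × ℕ → ℂ} (hs : Summable h) :
    ∑' p : ℕ × ℕ, h p = ∑' n : ℕ, ∑ kl ∈ Finset.HasAntidiagonal.antidiagonal n, h kl := by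
  calc ∑' p : ℕ × ℕ, h p
      = ∑' c : Σ n : ℕ, Finset.HasAntidiagonal.antidiagonal n, h (Finset.HasAntidiagonal.sigmaAntidiagonalEquivProd c) :=
        (Finset.HasAntidiagonal.sigmaAntidiagonalEquivProd.tsum_eq h).symm
    _ = ∑' (n : ℕ) (c : Finset.HasAntidiagonal.antidiagonal n), h (Finset.HasAntidiagonal.sigmaAntidiagonalEquivProd ⟨n, c⟩) :=
        Summable.tsum_sigma' (fun n => (hasSum_fintype _).summable)
          (Finset.HasAntidiagonal.sigmaAntidiagonalEquivProd.summable_iff.mpr hs)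
    _ = ∑' n : ℕ, ∑ kl ∈ Finset.HasAntidiagonal.antidiagonal n, h kl :=
        tsum_congr fun n => Finset.tsum_subtype (Finset.HasAntidiagonal.antidiagonal n) h

lemma binom_aux (a b : ℂ) (K : ℕ) :
    ∑ j ∈ Finset.range (K+1), ((K+1).choose j : ℂ) * a^j * b^(K+1-j)
      = (a+b)^(K+1) - a^(K+1) := by
  have h := add_pow a b (K+1)
  rw [Finset.sum_range_succ] at h
  simp only [Nat.choose_self, Nat.sub_self, pow_zero, Nat.cast_one, mul_one] at h
  rw [h, add_sub_cancel_right]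
  exact Finset.sum_congr rfl fun j hj => by ring

/-- The term-by-term identity after integration. -/
lemma key (a b x : ℂ) (j m : ℕ) :
    x * (cJ (a*x) j * dJ b x m * ((j ! : ℂ) * (m ! : ℂ) / (((j+m+1)! : ℕ) : ℂ)))
      = (-1:ℂ)^(j+m) * x^(j+m+1) / ((((j+m+1)! : ℕ) : ℂ))^2
        * (((j+m+1).choose j : ℂ) * a^j * b^(m+1)) := by
  have hc : (((j+m+1).choose j : ℕ) : ℂ)
      = (((j+m+1)! : ℕ) : ℂ) / ((j ! : ℂ) * (((m+1)! : ℕ) : ℂ)) := by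
    have e : j+m+1-j = m+1 := by omega
    rw [Nat.cast_choose ℂ (by omega), e]
  rw [hc]
  have h1 : ((j ! : ℕ) : ℂ) ≠ 0 := Nat.cast_ne_zero.2 (Nat.factorial_ne_zero _)
  have h2 : ((m ! : ℕ) : ℂ) ≠ 0 := Nat.cast_ne_zero.2 (Nat.factorial_ne_zero _)
  have h3 : (((m+1)! : ℕ) : ℂ) ≠ 0 := Nat.cast_ne_zero.2 (Nat.factorial_ne_zero _)
  have h4 : (((j+m+1)! : ℕ) : ℂ) ≠ 0 := Nat.cast_ne_zero.2 (Nat.factorial_ne_zero _)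
  simp only [cJ, dJ]
  field_simp
  ring

end J0aux

set_option maxHeartbeats 2000000 in
open J0aux in
/-- `J₀(2√((a+b)x)) = J₀(2√(ax)) − ∫₀ˣ J₀(2√(ay)) b J₁(2√(b(x−y)))/√(b(x−y)) dy`,
the integral over the segment from `0` to `x` being parametrized by `y = t·x`, `t ∈ [0,1]`. -/
theorem J0_shift_formula (a b x : ℂ) :
    J0c ((a + b) * x)
      = J0c (a * x) - x * ∫ t in (0:ℝ)..1, J0c (a * (t * x)) * j1c b ((1 - t) * x) := by
  have hcn : Summable fun n : ℕ => ‖cJ (a*x) n‖ := summable_cJ_norm _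
  have hdn : Summable fun m : ℕ => ‖dJ b x m‖ := summable_dJ_norm b x
  have hprod : Summable fun p : ℕ × ℕ => ‖cJ (a*x) p.1‖ * ‖dJ b x p.2‖ :=
    hcn.mul_of_nonneg hdn (fun _ => norm_nonneg _) (fun _ => norm_nonneg _)
  set F : ℕ × ℕ → ℝ → ℂ :=
    fun p t => cJ (a*x) p.1 * (t:ℂ)^p.1 * (dJ b x p.2 * ((1:ℂ)-(t:ℂ))^p.2) with hF
  -- Step 1: rewrite the integrand as a double series
  have hIeq : (∫ t in (0:ℝ)..1, J0c (a * (t * x)) * j1c b ((1 - t) * x))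
      = ∫ t in (0:ℝ)..1, ∑' p : ℕ × ℕ, F p t := by
    refine intervalIntegral.integral_congr fun t ht => ?_
    rw [Set.uIcc_of_le (by norm_num : (0:ℝ) ≤ 1)] at ht
    have ht0 : ‖(t:ℂ)‖ ≤ 1 := by
      rw [Complex.norm_real, Real.norm_eq_abs, abs_of_nonneg ht.1]; exact ht.2
    have ht1 : ‖(1:ℂ) - (t:ℂ)‖ ≤ 1 := by
      have e : ((1:ℂ) - (t:ℂ)) = (((1 - t : ℝ)) : ℂ) := by push_cast; ring
      rw [e, Complex.norm_real, Real.norm_eq_abs, abs_of_nonneg (by linarith [ht.2])]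
      linarith [ht.1]
    have hs1 : Summable fun n : ℕ => ‖cJ (a*x) n * (t:ℂ)^n‖ := by
      refine Summable.of_nonneg_of_le (fun _ => norm_nonneg _) (fun n => ?_) hcn
      rw [norm_mul, norm_pow]
      exact mul_le_of_le_one_right (norm_nonneg _) (pow_le_one₀ (norm_nonneg _) ht0)
    have hs2 : Summable fun m : ℕ => ‖dJ b x m * ((1:ℂ)-(t:ℂ))^m‖ := by
      refine Summable.of_nonneg_of_le (fun _ => norm_nonneg _) (fun m => ?_) hdn
      rw [norm_mul, norm_pow]
      exact mul_le_of_le_one_right (norm_nonneg _) (pow_le_one₀ (norm_nonneg _) ht1)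
    have e1 : a * ((t:ℂ) * x) = (a*x) * (t:ℂ) := by ring
    rw [e1, J0c_expand, j1c_expand]
    exact tsum_mul_tsum_of_summable_norm hs1 hs2
  -- Step 2: continuity / integrability
  have cont : ∀ p : ℕ × ℕ, Continuous (F p) := by
    intro p
    apply Continuous.mul
    · exact continuous_const.mul (Complex.continuous_ofReal.pow _)
    · exact continuous_const.mul ((continuous_const.sub Complex.continuous_ofReal).pow _)
  have hFint : ∀ p : ℕ × ℕ, IntegrableOn (F p) (Set.Ioc (0:ℝ) 1) := fun p =>
    (cont p).integrableOn_Ioc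
  -- bound on the integrals of norms
  have hbound : ∀ p : ℕ × ℕ,
      (∫ t in Set.Ioc (0:ℝ) 1, ‖F p t‖) ≤ ‖cJ (a*x) p.1‖ * ‖dJ b x p.2‖ := by
    intro p
    have hle : ∀ t ∈ Set.Ioc (0:ℝ) 1, ‖F p t‖ ≤ ‖cJ (a*x) p.1‖ * ‖dJ b x p.2‖ := by
      intro t ht
      have ht0 : ‖(t:ℂ)‖ ≤ 1 := by
        rw [Complex.norm_real, Real.norm_eq_abs, abs_of_nonneg ht.1.le]; exact ht.2
      have ht1 : ‖(1:ℂ) - (t:ℂ)‖ ≤ 1 := by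
        have e : ((1:ℂ) - (t:ℂ)) = (((1 - t : ℝ)) : ℂ) := by push_cast; ring
        rw [e, Complex.norm_real, Real.norm_eq_abs, abs_of_nonneg (by linarith [ht.2])]
        linarith [ht.1.le]
      have : ‖F p t‖ = ‖cJ (a*x) p.1‖ * ‖(t:ℂ)‖^p.1 * (‖dJ b x p.2‖ * ‖(1:ℂ)-(t:ℂ)‖^p.2) := by
        simp [hF, norm_mul, norm_pow]
      rw [this]
      have b1 : ‖(t:ℂ)‖^p.1 ≤ 1 := pow_le_one₀ (norm_nonneg _) ht0
      have b2 : ‖(1:ℂ)-(t:ℂ)‖^p.2 ≤ 1 := pow_le_one₀ (norm_nonneg _) ht1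
      calc ‖cJ (a*x) p.1‖ * ‖(t:ℂ)‖^p.1 * (‖dJ b x p.2‖ * ‖(1:ℂ)-(t:ℂ)‖^p.2)
          ≤ ‖cJ (a*x) p.1‖ * 1 * (‖dJ b x p.2‖ * 1) := by
            gcongr <;> first | exact norm_nonneg _ | positivity
        _ = ‖cJ (a*x) p.1‖ * ‖dJ b x p.2‖ := by ring
    calc (∫ t in Set.Ioc (0:ℝ) 1, ‖F p t‖)
        ≤ ∫ _t in Set.Ioc (0:ℝ) 1, ‖cJ (a*x) p.1‖ * ‖dJ b x p.2‖ :=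
          setIntegral_mono_on ((hFint p).norm) (integrableOn_const (by simp))
            measurableSet_Ioc hle
      _ = ‖cJ (a*x) p.1‖ * ‖dJ b x p.2‖ := by
          rw [setIntegral_const]; simp [Real.volume_Ioc]
  have hsumInt : Summable fun p : ℕ × ℕ => ∫ t in Set.Ioc (0:ℝ) 1, ‖F p t‖ :=
    Summable.of_nonneg_of_le (fun p => integral_nonneg fun t => norm_nonneg _) hbound hprod
  -- Step 3: swap integral and sum
  have hswap : (∫ t in Set.Ioc (0:ℝ) 1, ∑' p : ℕ × ℕ, F p t)
      = ∑' p : ℕ × ℕ, ∫ t in Set.Ioc (0:ℝ) 1, F p t :=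
    (integral_tsum_of_summable_integral_norm hFint hsumInt).symm
  -- Step 4: evaluate each integral
  have hval : ∀ p : ℕ × ℕ, (∫ t in Set.Ioc (0:ℝ) 1, F p t)
      = cJ (a*x) p.1 * dJ b x p.2
        * ((p.1 ! : ℂ) * (p.2 ! : ℂ) / (((p.1+p.2+1)! : ℕ) : ℂ)) := by
    intro p
    rw [← intervalIntegral.integral_of_le (by norm_num : (0:ℝ) ≤ 1)]
    have hcongr : (∫ t in (0:ℝ)..1, F p t)
        = ∫ t in (0:ℝ)..1, (cJ (a*x) p.1 * dJ b x p.2) * ((t:ℂ)^p.1 * ((1:ℂ)-(t:ℂ))^p.2) :=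
      intervalIntegral.integral_congr fun t _ => by simp only [hF]; ring
    rw [hcongr, intervalIntegral.integral_const_mul, beta_nat, mul_assoc]
  -- the series of the integrals
  set G : ℕ × ℕ → ℂ := fun p => cJ (a*x) p.1 * dJ b x p.2
      * ((p.1 ! : ℂ) * (p.2 ! : ℂ) / (((p.1+p.2+1)! : ℕ) : ℂ)) with hG
  have hGsum : Summable G := by
    apply Summable.of_norm
    refine Summable.of_nonneg_of_le (fun _ => norm_nonneg _) (fun p => ?_) hsumInt
    rw [hG]
    calc ‖cJ (a*x) p.1 * dJ b x p.2 * ((p.1 ! : ℂ) * (p.2 ! : ℂ) / (((p.1+p.2+1)! : ℕ) : ℂ))‖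
        = ‖∫ t in Set.Ioc (0:ℝ) 1, F p t‖ := by rw [hval p]
      _ ≤ ∫ t in Set.Ioc (0:ℝ) 1, ‖F p t‖ := norm_integral_le_integral_norm _
  -- Step 5: put things together
  have main : x * (∫ t in (0:ℝ)..1, J0c (a * (t * x)) * j1c b ((1 - t) * x))
      = J0c (a*x) - J0c ((a+b)*x) := by
    have hxG : Summable fun p : ℕ × ℕ => x * G p := hGsum.mul_left x
    have step : x * (∫ t in (0:ℝ)..1, J0c (a * (t * x)) * j1c b ((1 - t) * x))
        = ∑' p : ℕ × ℕ, x * G p := by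
      rw [hIeq, intervalIntegral.integral_of_le (by norm_num : (0:ℝ) ≤ 1), hswap,
        tsum_congr hval, tsum_mul_left]
    rw [step, tsum_antidiag hxG]
    -- evaluate each antidiagonal sum
    have hK : ∀ K : ℕ, (∑ kl ∈ Finset.HasAntidiagonal.antidiagonal K, x * G kl)
        = cJ (a*x) (K+1) - cJ ((a+b)*x) (K+1) := by
      intro K
      rw [Finset.Nat.sum_antidiagonal_eq_sum_range_succ_mk]
      have hterm : ∀ j ∈ Finset.range (K+1),
          x * G (j, K-j)
            = (-1:ℂ)^K * x^(K+1) / ((((K+1)! : ℕ) : ℂ))^2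
              * (((K+1).choose j : ℂ) * a^j * b^(K+1-j)) := by
        intro j hj
        have hjK : j ≤ K := Nat.lt_succ_iff.mp (Finset.mem_range.mp hj)
        have e1 : j + (K-j) = K := by omega
        have e2 : K - j + 1 = K + 1 - j := by omega
        have := key a b x j (K-j)
        rw [hG] at *
        simp only at this ⊢
        rw [this, e1, e2]
      rw [Finset.sum_congr rfl hterm, ← Finset.mul_sum, binom_aux]
      simp only [cJ, mul_pow]
      ring
    rw [tsum_congr hK]
    -- compare with the difference of the two J0c series
    have hA : Summable (cJ (a*x)) := (summable_cJ_norm (a*x)).of_norm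
    have hB : Summable (cJ ((a+b)*x)) := (summable_cJ_norm ((a+b)*x)).of_norm
    have hdiff : J0c (a*x) - J0c ((a+b)*x)
        = ∑' N : ℕ, (cJ (a*x) N - cJ ((a+b)*x) N) := by
      rw [J0c_eq_tsum_cJ, J0c_eq_tsum_cJ, Summable.tsum_sub hA hB]
    rw [hdiff, Summable.tsum_eq_zero_add (hA.sub hB)]
    have h0 : cJ (a*x) 0 - cJ ((a+b)*x) 0 = 0 := by simp [cJ]
    rw [h0, zero_add]
  linear_combination main
end

section
/- For all a, b and x: x J_1(2√((a+b)x))/√((a+b)x) = ∫_0^x J_0(2√(ay)) J_0(2√(b(x−y))) dy, as an identity of entire functions. -/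
open MeasureTheory

/-- `j1u u = J₁(2√u)/√u = ∑ (-1)ⁿ uⁿ/(n!(n+1)!)` (entire). -/
noncomputable def j1u (u : ℂ) : ℂ :=
  ∑' n : ℕ, (-1)^n * u^n / ((Nat.factorial n : ℂ) * (Nat.factorial (n+1) : ℂ))

lemma div_le_div_aux {A D K : ℝ} (hA : 0 ≤ A) (hD : 0 < D) (hK : 1 ≤ K) :
    A / (D * K) ≤ A / D :=
  div_le_div_of_nonneg_left hA hD (le_mul_of_one_le_right hD.le hK)

lemma summable_norm_J0 (u : ℂ) :
    Summable (fun n : ℕ => ‖(-1:ℂ)^n * u^n / ((Nat.factorial n : ℂ))^2‖) := by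
  refine Summable.of_nonneg_of_le (fun n => norm_nonneg _) (fun n => ?_)
    (Real.summable_pow_div_factorial ‖u‖)
  have h1 : (1:ℝ) ≤ (Nat.factorial n : ℝ) := by exact_mod_cast Nat.factorial_pos n
  have heq : ‖(-1:ℂ)^n * u^n / ((Nat.factorial n : ℂ))^2‖ = ‖u‖^n / ((Nat.factorial n : ℝ))^2 := by
    simp [norm_div, norm_mul, norm_pow, Complex.norm_natCast]
  rw [heq, sq]
  exact div_le_div_aux (by positivity) (by positivity) h1

lemma prod_fact_nat (m k : ℕ) :
    Nat.factorial m * ∏ j ∈ Finset.range (k+1), (m+1+j) = Nat.factorial (m+k+1) := by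
  induction k with
  | zero => simp [Nat.factorial_succ, Nat.mul_comm]
  | succ k ih =>
    rw [Finset.prod_range_succ, ← Nat.mul_assoc, ih]
    have h : m + 1 + (k+1) = (m + k + 1) + 1 := by omega
    have h2 : m + (k+1) + 1 = (m + k + 1) + 1 := by omega
    rw [h, h2]
    exact (Nat.mul_comm _ _).trans (Nat.factorial_succ _).symm

lemma beta_nat (m n : ℕ) :
    (∫ t in (0:ℝ)..1, ((t:ℂ))^m * ((1:ℂ) - (t:ℂ))^n)
      = (Nat.factorial m : ℂ) * (Nat.factorial n : ℂ) / (Nat.factorial (m+n+1) : ℂ) := by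
  have hu : 0 < Complex.re ((m:ℂ)+1) := by simp; positivity
  have h := Complex.betaIntegral_eval_nat_add_one_right hu n
  have hbeta : Complex.betaIntegral ((m:ℂ)+1) ((n:ℂ)+1)
      = ∫ t in (0:ℝ)..1, ((t:ℂ))^m * ((1:ℂ) - (t:ℂ))^n := by
    rw [Complex.betaIntegral]
    refine intervalIntegral.integral_congr (fun t ht => ?_)
    rw [add_sub_cancel_right, add_sub_cancel_right, Complex.cpow_natCast, Complex.cpow_natCast]
  have hm : (Nat.factorial m : ℂ) ≠ 0 := by exact_mod_cast Nat.factorial_ne_zero m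
  have hmn : (Nat.factorial (m+n+1) : ℂ) ≠ 0 := by exact_mod_cast Nat.factorial_ne_zero (m+n+1)
  have hprodC : (Nat.factorial m : ℂ) * ∏ j ∈ Finset.range (n+1), ((m:ℂ)+1+j)
      = (Nat.factorial (m+n+1) : ℂ) := by
    exact_mod_cast congrArg (Nat.cast : ℕ → ℂ) (prod_fact_nat m n)
  have hpne : (∏ j ∈ Finset.range (n+1), ((m:ℂ)+1+j)) ≠ 0 := by
    intro h0; rw [h0, mul_zero] at hprodC; exact hmn hprodC.symm
  rw [hbeta] at h
  rw [h, div_eq_div_iff hpne hmn, ← hprodC]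
  ring

noncomputable def Tterm (a b x : ℂ) (p : ℕ × ℕ) : ℂ :=
  (-1)^(p.1+p.2) * a^p.1 * b^p.2 * x^(p.1+p.2) /
    ((Nat.factorial p.1 : ℂ) * (Nat.factorial p.2 : ℂ) * (Nat.factorial (p.1+p.2+1) : ℂ))

lemma norm_Tterm_le (a b x : ℂ) (p : ℕ × ℕ) :
    ‖Tterm a b x p‖ ≤ ‖a*x‖^p.1 / (Nat.factorial p.1) * (‖b*x‖^p.2 / (Nat.factorial p.2)) := by
  obtain ⟨m, n⟩ := p
  have h1 : (1:ℝ) ≤ (Nat.factorial (m+n+1) : ℝ) := by exact_mod_cast Nat.factorial_pos (m+n+1)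
  have heq : ‖Tterm a b x (m,n)‖
      = ‖a‖^m * ‖b‖^n * ‖x‖^(m+n) /
        ((Nat.factorial m : ℝ) * (Nat.factorial n : ℝ) * (Nat.factorial (m+n+1) : ℝ)) := by
    simp [Tterm, norm_div, norm_mul, norm_pow, Complex.norm_natCast]
  have hrhs : ‖a*x‖^m / (Nat.factorial m) * (‖b*x‖^n / (Nat.factorial n))
      = ‖a‖^m * ‖b‖^n * ‖x‖^(m+n) / ((Nat.factorial m : ℝ) * (Nat.factorial n : ℝ)) := by
    rw [norm_mul, norm_mul, mul_pow, mul_pow, pow_add, div_mul_div_comm]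
    ring
  rw [heq, hrhs]
  exact div_le_div_aux (by positivity) (by positivity) h1

lemma summable_Tnorm (a b x : ℂ) : Summable (fun p : ℕ × ℕ => ‖Tterm a b x p‖) :=
  Summable.of_nonneg_of_le (fun _ => norm_nonneg _) (norm_Tterm_le a b x)
    (((Real.summable_pow_div_factorial ‖a*x‖).mul_of_nonneg
      (Real.summable_pow_div_factorial ‖b*x‖)
      (fun n => by positivity) (fun n => by positivity)))

lemma tsum_prod_eq_tsum_antidiagonal {T : ℕ × ℕ → ℂ} (hT : Summable T) :
    ∑' p : ℕ × ℕ, T p = ∑' n : ℕ, ∑ kl ∈ Finset.HasAntidiagonal.antidiagonal n, T kl := by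
  rw [← Finset.HasAntidiagonal.sigmaAntidiagonalEquivProd.tsum_eq T]
  rw [show (fun c : Σ n : ℕ, Finset.HasAntidiagonal.antidiagonal n => T (Finset.HasAntidiagonal.sigmaAntidiagonalEquivProd c))
      = (T ∘ Finset.HasAntidiagonal.sigmaAntidiagonalEquivProd) from rfl]
  rw [Summable.tsum_sigma' (fun n => (hasSum_fintype _).summable)
      (Finset.HasAntidiagonal.sigmaAntidiagonalEquivProd.summable_iff.2 hT)]
  refine tsum_congr (fun n => ?_)
  rw [← Finset.sum_finset_coe, ← tsum_fintype (L := SummationFilter.unconditional _)]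
  rfl

lemma sum_antidiagonal_T (a b x : ℂ) (k : ℕ) :
    ∑ kl ∈ Finset.HasAntidiagonal.antidiagonal k, Tterm a b x kl
      = (-1)^k * ((a+b)*x)^k / ((Nat.factorial k : ℂ) * (Nat.factorial (k+1) : ℂ)) := by
  rw [Finset.Nat.sum_antidiagonal_eq_sum_range_succ_mk, mul_pow, add_pow,
    Finset.sum_mul, Finset.mul_sum, Finset.sum_div]
  refine Finset.sum_congr rfl (fun m hm => ?_)
  have hmle : m ≤ k := Nat.lt_succ_iff.1 (Finset.mem_range.1 hm)
  have hmk : m + (k - m) = k := by omega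
  have hc : ((Nat.choose k m : ℂ)) * (Nat.factorial m : ℂ) * (Nat.factorial (k-m) : ℂ)
      = (Nat.factorial k : ℂ) := by
    exact_mod_cast congrArg (Nat.cast : ℕ → ℂ)
      (Nat.choose_mul_factorial_mul_factorial hmle)
  simp only [Tterm, hmk]
  have hfm : (Nat.factorial m : ℂ) ≠ 0 := by exact_mod_cast Nat.factorial_ne_zero m
  have hfkm : (Nat.factorial (k-m) : ℂ) ≠ 0 := by exact_mod_cast Nat.factorial_ne_zero (k-m)
  have hfk : (Nat.factorial k : ℂ) ≠ 0 := by exact_mod_cast Nat.factorial_ne_zero k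
  have hfk1 : (Nat.factorial (k+1) : ℂ) ≠ 0 := by exact_mod_cast Nat.factorial_ne_zero (k+1)
  rw [div_eq_div_iff (by exact mul_ne_zero (mul_ne_zero hfm hfkm) hfk1)
    (mul_ne_zero hfk hfk1)]
  linear_combination -((-1:ℂ))^k * a^m * b^(k-m) * x^k * ((Nat.factorial (k+1) : ℂ)) * hc

lemma j1u_eq_tsum_T (a b x : ℂ) :
    j1u ((a+b)*x) = ∑' p : ℕ × ℕ, Tterm a b x p := by
  rw [tsum_prod_eq_tsum_antidiagonal (summable_Tnorm a b x).of_norm, j1u]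
  exact tsum_congr fun k => (sum_antidiagonal_T a b x k).symm

noncomputable def Fterm (a b x : ℂ) (p : ℕ × ℕ) (t : ℝ) : ℂ :=
  ((-1)^p.1 * (a*((t:ℂ)*x))^p.1 / ((Nat.factorial p.1 : ℂ))^2) *
    ((-1)^p.2 * (b*((1-(t:ℂ))*x))^p.2 / ((Nat.factorial p.2 : ℂ))^2)

lemma J0_mul_eq (a b x : ℂ) (t : ℝ) :
    J0c (a * ((t:ℂ) * x)) * J0c (b * ((1 - (t:ℂ)) * x)) = ∑' p : ℕ × ℕ, Fterm a b x p t :=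
  tsum_mul_tsum_of_summable_norm (summable_norm_J0 _) (summable_norm_J0 _)

lemma continuous_Fterm (a b x : ℂ) (p : ℕ × ℕ) : Continuous (Fterm a b x p) := by
  unfold Fterm
  fun_prop

lemma integral_Fterm (a b x : ℂ) (p : ℕ × ℕ) :
    ∫ t in (0:ℝ)..1, Fterm a b x p t = Tterm a b x p := by
  obtain ⟨m, n⟩ := p
  have hcongr : ∀ t ∈ Set.uIcc (0:ℝ) 1, Fterm a b x (m,n) t
      = ((-1)^m * a^m * x^m / ((Nat.factorial m : ℂ))^2 *
         ((-1)^n * b^n * x^n / ((Nat.factorial n : ℂ))^2)) * (((t:ℂ))^m * ((1:ℂ) - (t:ℂ))^n) := by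
    intro t _
    simp only [Fterm, mul_pow]
    ring
  rw [intervalIntegral.integral_congr hcongr, intervalIntegral.integral_const_mul, beta_nat]
  have hfm : (Nat.factorial m : ℂ) ≠ 0 := by exact_mod_cast Nat.factorial_ne_zero m
  have hfn : (Nat.factorial n : ℂ) ≠ 0 := by exact_mod_cast Nat.factorial_ne_zero n
  have hfmn : (Nat.factorial (m+n+1) : ℂ) ≠ 0 := by exact_mod_cast Nat.factorial_ne_zero (m+n+1)
  simp only [Tterm]
  field_simp
  ring

lemma norm_Fterm_le (a b x : ℂ) (p : ℕ × ℕ) {t : ℝ} (ht : t ∈ Set.Ioc (0:ℝ) 1) :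
    ‖Fterm a b x p t‖ ≤ ‖a*x‖^p.1 / (Nat.factorial p.1) * (‖b*x‖^p.2 / (Nat.factorial p.2)) := by
  obtain ⟨m, n⟩ := p
  have ht1 : ‖((t:ℝ):ℂ)‖ ≤ 1 := by
    rw [Complex.norm_real, Real.norm_eq_abs, abs_of_pos ht.1]; exact ht.2
  have ht2 : ‖(1:ℂ) - (t:ℂ)‖ ≤ 1 := by
    rw [← Complex.ofReal_one, ← Complex.ofReal_sub, Complex.norm_real, Real.norm_eq_abs,
      abs_of_nonneg (by linarith [ht.2])]
    linarith [ht.1]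
  have hA : ‖a*((t:ℂ)*x)‖ ≤ ‖a*x‖ := by
    rw [norm_mul, norm_mul, norm_mul]
    calc ‖a‖ * (‖(t:ℂ)‖ * ‖x‖) ≤ ‖a‖ * (1 * ‖x‖) := by gcongr
    _ = ‖a‖ * ‖x‖ := by ring
  have hB : ‖b*((1-(t:ℂ))*x)‖ ≤ ‖b*x‖ := by
    rw [norm_mul, norm_mul, norm_mul]
    calc ‖b‖ * (‖(1:ℂ)-(t:ℂ)‖ * ‖x‖) ≤ ‖b‖ * (1 * ‖x‖) := by gcongr
    _ = ‖b‖ * ‖x‖ := by ring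
  have hfm : (1:ℝ) ≤ (Nat.factorial m : ℝ) := by exact_mod_cast Nat.factorial_pos m
  have hfn : (1:ℝ) ≤ (Nat.factorial n : ℝ) := by exact_mod_cast Nat.factorial_pos n
  have heq : ‖Fterm a b x (m,n) t‖
      = ‖a*((t:ℂ)*x)‖^m / ((Nat.factorial m : ℝ))^2 *
        (‖b*((1-(t:ℂ))*x)‖^n / ((Nat.factorial n : ℝ))^2) := by
    simp [Fterm, norm_div, norm_mul, norm_pow, Complex.norm_natCast]
  rw [heq]
  have h1 : ‖a*((t:ℂ)*x)‖^m / ((Nat.factorial m : ℝ))^2 ≤ ‖a*x‖^m / (Nat.factorial m : ℝ) :=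
    div_le_div₀ (by positivity) (pow_le_pow_left₀ (norm_nonneg _) hA m) (by positivity)
      (by nlinarith)
  have h2 : ‖b*((1-(t:ℂ))*x)‖^n / ((Nat.factorial n : ℝ))^2 ≤ ‖b*x‖^n / (Nat.factorial n : ℝ) :=
    div_le_div₀ (by positivity) (pow_le_pow_left₀ (norm_nonneg _) hB n) (by positivity)
      (by nlinarith)
  exact mul_le_mul h1 h2 (by positivity) (by positivity)

lemma integral_swap_tsum (a b x : ℂ) :
    ∫ t in (0:ℝ)..1, (∑' p : ℕ × ℕ, Fterm a b x p t)
      = ∑' p : ℕ × ℕ, ∫ t in (0:ℝ)..1, Fterm a b x p t := by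
  have hIoc : ∀ g : ℝ → ℂ, (∫ t in (0:ℝ)..1, g t) = ∫ t in Set.Ioc (0:ℝ) 1, g t := fun g =>
    intervalIntegral.integral_of_le zero_le_one
  rw [hIoc]
  conv_rhs => congr; ext p; rw [hIoc]
  have hint : ∀ p : ℕ × ℕ, Integrable (Fterm a b x p) (volume.restrict (Set.Ioc (0:ℝ) 1)) :=
    fun p => (continuous_Fterm a b x p).integrableOn_Ioc
  have hmeas : volume (Set.Ioc (0:ℝ) 1) = 1 := by simp
  refine (MeasureTheory.integral_tsum_of_summable_integral_norm hint ?_).symm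
  refine Summable.of_nonneg_of_le
    (fun p => integral_nonneg (fun t => norm_nonneg _)) (fun p => ?_)
    (((Real.summable_pow_div_factorial ‖a*x‖).mul_of_nonneg
      (Real.summable_pow_div_factorial ‖b*x‖)
      (fun n => by positivity) (fun n => by positivity)))
  have hb : ∀ t ∈ Set.Ioc (0:ℝ) 1, ‖‖Fterm a b x p t‖‖
      ≤ ‖a*x‖^p.1 / (Nat.factorial p.1) * (‖b*x‖^p.2 / (Nat.factorial p.2)) := fun t ht => by
    rw [Real.norm_eq_abs, abs_of_nonneg (norm_nonneg _)]
    exact norm_Fterm_le a b x p ht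
  have hle := MeasureTheory.norm_setIntegral_le_of_norm_le_const
    (by rw [hmeas]; exact ENNReal.one_lt_top) hb
    (f := fun t => ‖Fterm a b x p t‖)
  rw [Measure.real_def, hmeas, ENNReal.toReal_one, mul_one] at hle
  calc (∫ t in Set.Ioc (0:ℝ) 1, ‖Fterm a b x p t‖)
      ≤ ‖∫ t in Set.Ioc (0:ℝ) 1, ‖Fterm a b x p t‖‖ := le_abs_self _
    _ ≤ _ := hle

/-- `x J₁(2√((a+b)x))/√((a+b)x) = ∫₀ˣ J₀(2√(ay)) J₀(2√(b(x−y))) dy`,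
the integral over the segment from `0` to `x` being parametrized by `y = t·x`, `t ∈ [0,1]`. -/
theorem J0_convolution_formula (a b x : ℂ) :
    x * j1u ((a + b) * x)
      = x * ∫ t in (0:ℝ)..1, J0c (a * (t * x)) * J0c (b * ((1 - t) * x)) := by
  congr 1
  have h1 : (∫ t in (0:ℝ)..1, J0c (a * (t * x)) * J0c (b * ((1 - t) * x)))
      = ∫ t in (0:ℝ)..1, (∑' p : ℕ × ℕ, Fterm a b x p t) :=
    intervalIntegral.integral_congr (fun t _ => J0_mul_eq a b x t)
  rw [h1, integral_swap_tsum, j1u_eq_tsum_T]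
  exact tsum_congr fun p => (integral_Fterm a b x p).symm
end

section
/- For all b and x: b I_1(2√(b(b−x)))/√(b(b−x)) = ∫_0^b J_0(2√(xy)) I_0(2√(b(b−y))) dy, as an identity of entire functions, where I_0(2√u) = ∑_{n≥0} u^n/(n!)^2 and b I_1(2√(bu))/√(bu) = ∑_{n≥0} b^{n+1} u^n/(n!(n+1)!). -/
open MeasureTheory

/-- `I0c u = I₀(2√u) = ∑ uⁿ/(n!)²` (entire). -/
noncomputable def I0c (u : ℂ) : ℂ := ∑' n : ℕ, u^n / ((Nat.factorial n : ℂ))^2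

/-- `i1c b u = b I₁(2√(bu))/√(bu) = ∑ bⁿ⁺¹ uⁿ/(n!(n+1)!)` (entire). -/
noncomputable def i1c (b u : ℂ) : ℂ :=
  ∑' n : ℕ, b^(n+1) * u^n / ((Nat.factorial n : ℂ) * (Nat.factorial (n+1) : ℂ))

section Aux
open Finset

lemma prod_range_asc (m : ℕ) : ∀ n : ℕ,
    ∏ j ∈ Finset.range n, ((m:ℂ) + 1 + j) = ((m+1).ascFactorial n : ℕ)
  | 0 => by simp
  | (k+1) => by
      rw [Finset.prod_range_succ, prod_range_asc m k, Nat.ascFactorial_succ]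
      push_cast; ring

lemma beta_nat_int (m n : ℕ) :
    ∫ t in (0:ℝ)..1, (t:ℂ)^m * (1 - (t:ℂ))^n
      = (m.factorial : ℂ) * n.factorial / ((m+n+1).factorial : ℂ) := by
  have h0 : Complex.betaIntegral (m+1) (n+1)
      = ∫ t in (0:ℝ)..1, (t:ℂ)^m * (1 - (t:ℂ))^n := by
    rw [Complex.betaIntegral]
    congr 1
    ext t
    rw [add_sub_cancel_right, add_sub_cancel_right, Complex.cpow_natCast,
      Complex.cpow_natCast]
  have h1 := Complex.betaIntegral_eval_nat_add_one_right
    (u := (m:ℂ)+1) (by simp; positivity) n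
  rw [← h0]
  push_cast at h1 ⊢
  rw [h1]
  have h2 : ∏ j ∈ Finset.range (n + 1), ((m:ℂ) + 1 + j)
      = ((m+n+1).factorial : ℂ) / (m.factorial : ℂ) := by
    rw [eq_div_iff (by exact_mod_cast Nat.factorial_ne_zero m), prod_range_asc,
      mul_comm]
    rw_mod_cast [Nat.factorial_mul_ascFactorial m (n+1)]
    congr 1
  rw [h2]
  have hm : (m.factorial : ℂ) ≠ 0 := by exact_mod_cast Nat.factorial_ne_zero m
  have hmn : ((m+n+1).factorial : ℂ) ≠ 0 := by exact_mod_cast Nat.factorial_ne_zero _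
  field_simp

lemma sum_aux (z : ℂ) : Summable fun n : ℕ => ‖z‖^n / ((n.factorial : ℝ))^2 := by
  refine Summable.of_nonneg_of_le (fun n => by positivity) (fun n => ?_)
    (Real.summable_pow_div_factorial ‖z‖)
  have h1 : (1:ℝ) ≤ (n.factorial : ℝ) := by exact_mod_cast Nat.one_le_iff_ne_zero.mpr n.factorial_ne_zero
  have : (n.factorial : ℝ) ≤ ((n.factorial : ℝ))^2 := by nlinarith
  gcongr

-- coefficient functions
noncomputable def aC (x b : ℂ) (m : ℕ) : ℂ := (-1)^m * (x*b)^m / ((m.factorial : ℂ))^2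
noncomputable def cC (b : ℂ) (n : ℕ) : ℂ := (b^2)^n / ((n.factorial : ℂ))^2
noncomputable def gP (x b : ℂ) (p : ℕ × ℕ) : ℂ :=
  (aC x b p.1 * cC b p.2) *
    ((p.1.factorial : ℂ) * (p.2.factorial : ℂ) / (((p.1+p.2+1).factorial : ℂ)))

lemma norm_aC (x b : ℂ) (m : ℕ) : ‖aC x b m‖ = ‖x*b‖^m / ((m.factorial : ℝ))^2 := by
  simp [aC, norm_div, norm_mul, norm_pow]

lemma norm_cC (b : ℂ) (n : ℕ) : ‖cC b n‖ = ‖b^2‖^n / ((n.factorial : ℝ))^2 := by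
  simp [cC, norm_div, norm_pow]

lemma summable_norm_aC (x b : ℂ) : Summable fun m => ‖aC x b m‖ :=
  (sum_aux (x*b)).congr fun m => (norm_aC x b m).symm

lemma summable_norm_cC (b : ℂ) : Summable fun n => ‖cC b n‖ :=
  (sum_aux (b^2)).congr fun n => (norm_cC b n).symm

lemma summable_norm_prod (x b : ℂ) :
    Summable fun p : ℕ × ℕ => ‖aC x b p.1‖ * ‖cC b p.2‖ :=
  by
  have h := summable_mul_of_summable_norm (R := ℝ)
    ((summable_norm_aC x b).congr (fun m => (norm_norm _).symm))
    ((summable_norm_cC b).congr (fun n => (norm_norm _).symm))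
  exact h

lemma summable_gP (x b : ℂ) : Summable (gP x b) := by
  refine Summable.of_norm_bounded (summable_norm_prod x b) (fun p => ?_)
  rw [gP, norm_mul, norm_mul]
  have hb : ‖(p.1.factorial : ℂ) * (p.2.factorial : ℂ) / (((p.1+p.2+1).factorial : ℂ))‖ ≤ 1 := by
    rw [norm_div, norm_mul]
    simp only [Complex.norm_natCast]
    rw [div_le_one (by positivity)]
    have h1 : p.1.factorial * p.2.factorial ≤ (p.1+p.2).factorial :=
      Nat.le_of_dvd (Nat.factorial_pos _) (Nat.factorial_mul_factorial_dvd_factorial_add _ _)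
    have h2 : (p.1+p.2).factorial ≤ (p.1+p.2+1).factorial :=
      Nat.factorial_le (Nat.le_succ _)
    exact_mod_cast h1.trans h2
  calc ‖aC x b p.1‖ * ‖cC b p.2‖ * ‖_ / _‖
      ≤ ‖aC x b p.1‖ * ‖cC b p.2‖ * 1 := by gcongr
    _ = ‖aC x b p.1‖ * ‖cC b p.2‖ := mul_one _

-- per-k identity for the LHS
lemma antidiag_sum (x b : ℂ) (k : ℕ) :
    b * ∑ kl ∈ Finset.HasAntidiagonal.antidiagonal k, gP x b kl
      = b^(k+1) * (b-x)^k / ((k.factorial : ℂ) * ((k+1).factorial : ℂ)) := by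
  have hbx : b - x = (-x) + b := by ring
  rw [hbx, Commute.add_pow' (Commute.all _ _), Finset.mul_sum, Finset.mul_sum, Finset.sum_div]
  refine Finset.sum_congr rfl (fun kl hkl => ?_)
  obtain ⟨i, j⟩ := kl
  rw [Finset.HasAntidiagonal.mem_antidiagonal] at hkl
  subst hkl
  simp only [nsmul_eq_mul]
  rw [gP, aC, cC]
  have hch : ((i+j).choose i : ℂ) * (i.factorial : ℂ) * (j.factorial : ℂ)
      = ((i+j).factorial : ℂ) := by
    have h := Nat.add_choose_mul_factorial_mul_factorial j i
    rw [Nat.add_comm j i, Nat.mul_right_comm] at h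
    exact_mod_cast h
  have hi : (i.factorial : ℂ) ≠ 0 := by exact_mod_cast Nat.factorial_ne_zero i
  have hj : (j.factorial : ℂ) ≠ 0 := by exact_mod_cast Nat.factorial_ne_zero j
  have hij : ((i+j).factorial : ℂ) ≠ 0 := by exact_mod_cast Nat.factorial_ne_zero _
  have hij1 : (((i+j)+1).factorial : ℂ) ≠ 0 := by exact_mod_cast Nat.factorial_ne_zero _
  field_simp
  rw [← hch]
  ring

end Aux

set_option maxHeartbeats 1000000 in
/-- `b I₁(2√(b(b−x)))/√(b(b−x)) = ∫₀ᵇ J₀(2√(xy)) I₀(2√(b(b−y))) dy`,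
the integral over the segment from `0` to `b` being parametrized by `y = t·b`, `t ∈ [0,1]`. -/
theorem i1_integral_equation (b x : ℂ) :
    i1c b (b - x)
      = b * ∫ t in (0:ℝ)..1, J0c (x * (t * b)) * I0c (b * (b - t * b)) := by
  have h01 : (0:ℝ) ≤ 1 := zero_le_one
  -- Step 1: expand the integrand as a double series
  have hint : ∀ t : ℝ, J0c (x * (t * b)) * I0c (b * (b - t * b))
      = ∑' p : ℕ × ℕ, (aC x b p.1 * cC b p.2) * ((t:ℂ)^p.1 * (1 - (t:ℂ))^p.2) := by
    intro t
    have hJ : J0c (x * (t * b)) = ∑' m, aC x b m * (t:ℂ)^m := by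
      rw [J0c]
      refine tsum_congr fun m => ?_
      rw [aC, show x * ((t:ℂ) * b) = (x*b) * (t:ℂ) by ring, mul_pow]
      ring
    have hI : I0c (b * (b - t * b)) = ∑' n, cC b n * (1 - (t:ℂ))^n := by
      rw [I0c]
      refine tsum_congr fun n => ?_
      rw [cC, show b * (b - (t:ℂ) * b) = (b^2) * (1 - (t:ℂ)) by ring, mul_pow]
      ring
    have hA : Summable fun m => ‖aC x b m * (t:ℂ)^m‖ := by
      refine (sum_aux (x*b*(t:ℂ))).congr fun m => ?_
      conv_rhs => rw [norm_mul, norm_aC, norm_pow]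
      rw [norm_mul, mul_pow]
      ring
    have hB : Summable fun n => ‖cC b n * (1 - (t:ℂ))^n‖ := by
      refine (sum_aux (b^2*(1 - (t:ℂ)))).congr fun n => ?_
      conv_rhs => rw [norm_mul, norm_cC]
      simp only [norm_pow, norm_mul, mul_pow]
      ring
    rw [hJ, hI, tsum_mul_tsum_of_summable_norm hA hB]
    exact tsum_congr fun p => by ring
  -- Step 2: term-by-term integration
  have hFint : ∀ p : ℕ × ℕ, Integrable
      (fun t : ℝ => (aC x b p.1 * cC b p.2) * ((t:ℂ)^p.1 * (1-(t:ℂ))^p.2))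
      (volume.restrict (Set.Ioc 0 1)) := by
    intro p
    apply Continuous.integrableOn_Ioc
    fun_prop
  have hFsum : Summable fun p : ℕ×ℕ =>
      ∫ t in Set.Ioc (0:ℝ) 1, ‖(aC x b p.1 * cC b p.2) * ((t:ℂ)^p.1 * (1-(t:ℂ))^p.2)‖ := by
    refine Summable.of_nonneg_of_le
      (fun p => integral_nonneg (fun t => norm_nonneg _)) (fun p => ?_)
      (summable_norm_prod x b)
    have hb : ∀ t ∈ Set.Ioc (0:ℝ) 1,
        ‖(aC x b p.1 * cC b p.2) * ((t:ℂ)^p.1 * (1-(t:ℂ))^p.2)‖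
          ≤ ‖aC x b p.1‖ * ‖cC b p.2‖ := by
      intro t ht
      obtain ⟨ht0, ht1⟩ := ht
      rw [norm_mul, norm_mul, norm_mul, norm_pow, norm_pow]
      have h1 : ‖(t:ℂ)‖ ≤ 1 := by
        rw [Complex.norm_real, Real.norm_eq_abs, abs_of_pos ht0]; exact ht1
      have h2 : ‖1 - (t:ℂ)‖ ≤ 1 := by
        rw [show (1 - (t:ℂ)) = ((1 - t : ℝ) : ℂ) by push_cast; ring,
          Complex.norm_real, Real.norm_eq_abs, abs_of_nonneg (by linarith)]
        linarith
      have h3 : ‖(t:ℂ)‖^p.1 * ‖1-(t:ℂ)‖^p.2 ≤ 1 :=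
        mul_le_one₀ (pow_le_one₀ (norm_nonneg _) h1) (by positivity)
          (pow_le_one₀ (norm_nonneg _) h2)
      calc ‖aC x b p.1‖ * ‖cC b p.2‖ * (‖(t:ℂ)‖^p.1 * ‖1-(t:ℂ)‖^p.2)
          ≤ ‖aC x b p.1‖ * ‖cC b p.2‖ * 1 := by gcongr <;> positivity
        _ = _ := mul_one _
    calc ∫ t in Set.Ioc (0:ℝ) 1, ‖(aC x b p.1 * cC b p.2) * ((t:ℂ)^p.1 * (1-(t:ℂ))^p.2)‖
        ≤ ∫ _t in Set.Ioc (0:ℝ) 1, (‖aC x b p.1‖ * ‖cC b p.2‖) :=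
          setIntegral_mono_on ((hFint p).norm)
            (integrableOn_const (by simp [Real.volume_Ioc]))
            measurableSet_Ioc hb
      _ = ‖aC x b p.1‖ * ‖cC b p.2‖ := by
          simp [Real.volume_Ioc]
  have hswap : (∫ t in (0:ℝ)..1, J0c (x * (t * b)) * I0c (b * (b - t * b)))
      = ∑' p : ℕ×ℕ, gP x b p := by
    rw [intervalIntegral.integral_of_le h01]
    calc ∫ t in Set.Ioc (0:ℝ) 1, J0c (x * (t * b)) * I0c (b * (b - t * b))
        = ∫ t in Set.Ioc (0:ℝ) 1,
            ∑' p : ℕ × ℕ, (aC x b p.1 * cC b p.2) * ((t:ℂ)^p.1 * (1 - (t:ℂ))^p.2) := by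
          simp only [hint]
      _ = ∑' p : ℕ×ℕ, ∫ t in Set.Ioc (0:ℝ) 1,
            (aC x b p.1 * cC b p.2) * ((t:ℂ)^p.1 * (1 - (t:ℂ))^p.2) :=
          (integral_tsum_of_summable_integral_norm hFint hFsum).symm
      _ = ∑' p : ℕ×ℕ, gP x b p := by
          refine tsum_congr fun p => ?_
          rw [← intervalIntegral.integral_of_le h01, intervalIntegral.integral_const_mul,
            beta_nat_int p.1 p.2]
          rfl
  -- Step 3: rearrange LHS
  have hsig : ∑' p : ℕ×ℕ, gP x b p = ∑' k, ∑ kl ∈ Finset.HasAntidiagonal.antidiagonal k, gP x b kl := by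
    conv_rhs => congr; ext k; rw [← Finset.sum_finset_coe, ← tsum_fintype (L := SummationFilter.unconditional _)]
    rw [← Finset.HasAntidiagonal.sigmaAntidiagonalEquivProd.tsum_eq (gP x b)]
    exact Summable.tsum_sigma' (fun k => (hasSum_fintype _).summable)
      (Finset.HasAntidiagonal.sigmaAntidiagonalEquivProd.summable_iff.mpr (summable_gP x b))
  have hL : i1c b (b - x) = b * ∑' p : ℕ×ℕ, gP x b p := by
    rw [i1c, hsig, ← tsum_mul_left]
    exact tsum_congr fun k => (antidiag_sum x b k).symm
  rw [hL, hswap]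
end

section
/- Let P_n be defined recursively by P_0(x) = 1 and P_{n+1}(x) = P_n(x) − 2∫_0^x P_n(y) dy. Then P_n(x) = ∑_{j=0}^n C(n,j) (−2x)^j / j!, i.e. P_n(x) = L_n(2x) where L_n is the n-th Laguerre polynomial. -/
open MeasureTheory

/-- `P 0 = 1`, `P (n+1) x = P n x − 2∫₀ˣ P n y dy`. -/
noncomputable def P : ℕ → ℝ → ℝ
  | 0 => fun _ => 1
  | n + 1 => fun x => P n x - 2 * ∫ y in (0:ℝ)..x, P n y

theorem P_eq_laguerre (n : ℕ) (x : ℝ) :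
    P n x = ∑ j ∈ Finset.range (n + 1),
      (n.choose j : ℝ) * (-2 * x)^j / (Nat.factorial j : ℝ) := by
  induction n generalizing x with
  | zero => simp [P]
  | succ n ih =>
    have hint : (∫ y in (0:ℝ)..x, P n y)
        = ∑ j ∈ Finset.range (n + 1),
          (n.choose j : ℝ) * (-2)^j * x^(j+1) / ((j+1) * Nat.factorial j) := by
      rw [intervalIntegral.integral_congr (g := fun y => ∑ j ∈ Finset.range (n+1),
        (n.choose j : ℝ) * (-2 * y)^j / (Nat.factorial j)) (fun y _ => ih y)]
      rw [intervalIntegral.integral_finset_sum]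
      · refine Finset.sum_congr rfl fun j _ => ?_
        have h : ∀ y : ℝ, (n.choose j : ℝ) * (-2 * y)^j / (Nat.factorial j)
            = ((n.choose j : ℝ) * (-2)^j / (Nat.factorial j)) * y^j := by
          intro y; rw [mul_pow]; ring
        simp_rw [h]
        have hf : (Nat.factorial j : ℝ) ≠ 0 := Nat.cast_ne_zero.mpr (Nat.factorial_ne_zero j)
        have hj : ((j : ℝ) + 1) ≠ 0 := by positivity
        rw [intervalIntegral.integral_const_mul, integral_pow]
        field_simp
        rw [zero_pow (Nat.succ_ne_zero j), sub_zero]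
      · intro j _
        apply Continuous.intervalIntegrable
        continuity
    rw [show P (n+1) x = P n x - 2 * ∫ y in (0:ℝ)..x, P n y from rfl, ih, hint]
    rw [Finset.sum_range_succ' (fun j => ((n+1).choose j : ℝ) * (-2 * x)^j / (Nat.factorial j)) (n+1)]
    rw [Finset.sum_range_succ' (fun j => (n.choose j : ℝ) * (-2 * x)^j / (Nat.factorial j)) n]
    have hext : ∑ i ∈ Finset.range n,
        (n.choose (i+1) : ℝ) * (-2 * x)^(i+1) / (Nat.factorial (i+1))
        = ∑ i ∈ Finset.range (n+1),
        (n.choose (i+1) : ℝ) * (-2 * x)^(i+1) / (Nat.factorial (i+1)) := by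
      rw [Finset.sum_range_succ, Nat.choose_succ_self]
      simp
    rw [hext, Finset.mul_sum]
    have key : ∑ i ∈ Finset.range (n+1),
        ((n.choose (i+1) : ℝ) * (-2 * x)^(i+1) / (Nat.factorial (i+1))
          - 2 * ((n.choose i : ℝ) * (-2)^i * x^(i+1) / ((i+1) * Nat.factorial i)))
        = ∑ i ∈ Finset.range (n+1),
          (((n+1).choose (i+1) : ℝ)) * (-2 * x)^(i+1) / (Nat.factorial (i+1)) := by
      refine Finset.sum_congr rfl fun i _ => ?_
      have hf : (Nat.factorial i : ℝ) ≠ 0 := Nat.cast_ne_zero.mpr (Nat.factorial_ne_zero i)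
      have hi : ((i : ℝ) + 1) ≠ 0 := by positivity
      rw [Nat.choose_succ_succ, Nat.factorial_succ]
      push_cast
      field_simp
      ring
    rw [Finset.sum_sub_distrib] at key
    simp only [Nat.choose_zero_right, pow_zero, Nat.factorial_zero, Nat.cast_one, mul_one]
    linarith
end
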